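/- arXiv:2007.12924 — 6 statements merged into one kernel-verified Lean document; each statement's English description precedes it below -/
import Mathlib

section
/- Let (μ_k) be a sequence of non-negative finite Borel measures on ℝⁿ with finite first moments, and μ such a measure. If the family (μ_k) is uniformly integrable and μ_k converges weakly to μ, then the zonoids Z(μ_k) converge to Z(μ) in the Hausdorff metric. -/
open MeasureTheory Pointwise Filter Topology
open scoped InnerProductSpace

/-- The zonoid of a Borel measure on `ℝⁿ`. -/
noncomputable def zonoid {n : ℕ} (μ : Measure (EuclideanSpace ℝ (Fin n))) :
    Set (EuclideanSpace ℝ (Fin n)) :=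
  {z | ∃ φ : EuclideanSpace ℝ (Fin n) → ℝ, Measurable φ ∧
    (∀ x, φ x ∈ Set.Icc (0 : ℝ) 1) ∧ z = ∫ x, φ x • x ∂μ}

variable {n : ℕ}

lemma integrable_phi_smul {μ : Measure (EuclideanSpace ℝ (Fin n))}
    (hμ : Integrable (fun x => x) μ) {φ : EuclideanSpace ℝ (Fin n) → ℝ}
    (hm : Measurable φ) (hb : ∀ x, φ x ∈ Set.Icc (0:ℝ) 1) :
    Integrable (fun x => φ x • x) μ := by
  refine Integrable.mono' hμ.norm (AEStronglyMeasurable.smul hm.aestronglyMeasurable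
    aestronglyMeasurable_id) (ae_of_all _ fun x => ?_)
  rw [norm_smul]
  have h1 := (hb x).1; have h2 := (hb x).2
  calc ‖φ x‖ * ‖x‖ ≤ 1 * ‖x‖ := by
        apply mul_le_mul_of_nonneg_right _ (norm_nonneg _)
        rw [Real.norm_eq_abs, abs_of_nonneg h1]; exact h2
    _ = ‖x‖ := one_mul _

lemma zero_mem_zonoid (μ : Measure (EuclideanSpace ℝ (Fin n))) : (0 : EuclideanSpace ℝ (Fin n)) ∈ zonoid μ :=
  ⟨fun _ => 0, measurable_const, fun _ => ⟨le_refl _, zero_le_one⟩, by simp⟩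

lemma integrable_posinner {μ : Measure (EuclideanSpace ℝ (Fin n))}
    (hμ : Integrable (fun x => x) μ) (u : EuclideanSpace ℝ (Fin n)) :
    Integrable (fun x => max ⟪u, x⟫_ℝ 0) μ := by
  refine Integrable.mono' (hμ.norm.const_mul ‖u‖)
    (((continuous_const.inner continuous_id).max continuous_const).aestronglyMeasurable) (ae_of_all _ fun x => ?_)
  rw [Real.norm_eq_abs]
  rcases le_or_gt ⟪u, x⟫_ℝ 0 with h | h
  · rw [max_eq_right h]; simpa using mul_nonneg (norm_nonneg u) (norm_nonneg x)
  · rw [max_eq_left h.le, abs_of_pos h]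
    exact real_inner_le_norm u x

lemma inner_le_posinner {μ : Measure (EuclideanSpace ℝ (Fin n))}
    (hμ : Integrable (fun x => x) μ) {z u : EuclideanSpace ℝ (Fin n)} (hz : z ∈ zonoid μ) :
    ⟪u, z⟫_ℝ ≤ ∫ x, max ⟪u, x⟫_ℝ 0 ∂μ := by
  obtain ⟨φ, hm, hb, rfl⟩ := hz
  rw [← integral_inner (integrable_phi_smul hμ hm hb)]
  refine integral_mono ?_ (integrable_posinner hμ u) fun x => ?_
  · exact Integrable.const_inner u (integrable_phi_smul hμ hm hb)
  · simp only [real_inner_smul_right]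
    rcases le_or_gt ⟪u, x⟫_ℝ 0 with h | h
    · calc φ x * ⟪u, x⟫_ℝ ≤ 0 := mul_nonpos_of_nonneg_of_nonpos (hb x).1 h
        _ ≤ max ⟪u, x⟫_ℝ 0 := le_max_right _ _
    · calc φ x * ⟪u, x⟫_ℝ ≤ 1 * ⟪u, x⟫_ℝ := mul_le_mul_of_nonneg_right (hb x).2 h.le
        _ = ⟪u, x⟫_ℝ := one_mul _
        _ ≤ max ⟪u, x⟫_ℝ 0 := le_max_left _ _

lemma exists_attain {μ : Measure (EuclideanSpace ℝ (Fin n))}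
    (hμ : Integrable (fun x => x) μ) (u : EuclideanSpace ℝ (Fin n)) :
    ∃ y ∈ zonoid μ, ⟪u, y⟫_ℝ = ∫ x, max ⟪u, x⟫_ℝ 0 ∂μ := by
  set S : Set (EuclideanSpace ℝ (Fin n)) := {x | 0 < ⟪u, x⟫_ℝ} with hS
  have hSmeas : MeasurableSet S :=
    (isOpen_lt continuous_const (continuous_const.inner continuous_id)).measurableSet
  set φ : EuclideanSpace ℝ (Fin n) → ℝ := S.indicator (fun _ => 1) with hφ
  have hm : Measurable φ := measurable_const.indicator hSmeas
  have hb : ∀ x, φ x ∈ Set.Icc (0:ℝ) 1 := by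
    intro x
    by_cases h : x ∈ S <;> simp [hφ, h]
  refine ⟨∫ x, φ x • x ∂μ, ⟨φ, hm, hb, rfl⟩, ?_⟩
  rw [← integral_inner (integrable_phi_smul hμ hm hb)]
  refine integral_congr_ae (ae_of_all _ fun x => ?_)
  simp only [real_inner_smul_right]
  by_cases h : x ∈ S
  · have h' : 0 < ⟪u, x⟫_ℝ := h
    rw [hφ, Set.indicator_of_mem h, one_mul, max_eq_left h'.le]
  · have h' : ¬ (0 < ⟪u, x⟫_ℝ) := h
    rw [hφ, Set.indicator_of_notMem h, zero_mul, max_eq_right (not_lt.mp h')]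

lemma convex_zonoid {μ : Measure (EuclideanSpace ℝ (Fin n))}
    (hμ : Integrable (fun x => x) μ) : Convex ℝ (zonoid μ) := by
  rintro z₁ ⟨φ₁, hm₁, hb₁, rfl⟩ z₂ ⟨φ₂, hm₂, hb₂, rfl⟩ a b ha hb hab
  refine ⟨fun x => a * φ₁ x + b * φ₂ x, (hm₁.const_mul a).add (hm₂.const_mul b),
    fun x => ⟨add_nonneg (mul_nonneg ha (hb₁ x).1) (mul_nonneg hb (hb₂ x).1), ?_⟩, ?_⟩
  · have h1 : a * φ₁ x ≤ a * 1 := mul_le_mul_of_nonneg_left (hb₁ x).2 ha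
    have h2 : b * φ₂ x ≤ b * 1 := mul_le_mul_of_nonneg_left (hb₂ x).2 hb
    simp only []
    linarith
  · have i1 : Integrable (fun x => a • (φ₁ x • x)) μ := (integrable_phi_smul hμ hm₁ hb₁).smul a
    have i2 : Integrable (fun x => b • (φ₂ x • x)) μ := (integrable_phi_smul hμ hm₂ hb₂).smul b
    have e : (fun x : EuclideanSpace ℝ (Fin n) => (a * φ₁ x + b * φ₂ x) • x)
        = fun x => a • (φ₁ x • x) + b • (φ₂ x • x) :=
      funext fun x => by rw [smul_smul, smul_smul, add_smul]
    show a • ∫ x, φ₁ x • x ∂μ + b • ∫ x, φ₂ x • x ∂μ = ∫ x, (a * φ₁ x + b * φ₂ x) • x ∂μ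
    rw [e, integral_add i1 i2, integral_smul, integral_smul]

lemma infDist_le_of_unit {E' : Type*} [NormedAddCommGroup E'] [InnerProductSpace ℝ E']
    [CompleteSpace E'] {s : Set E'} (hconv : Convex ℝ s) (hne : s.Nonempty) (z : E') {r : ℝ}
    (hr : 0 ≤ r) (H : ∀ u : E', ‖u‖ = 1 → ∃ y ∈ s, ⟪u, z⟫_ℝ - ⟪u, y⟫_ℝ ≤ r) :
    Metric.infDist z s ≤ r := by
  obtain ⟨p, hp, hpmin⟩ := exists_norm_eq_iInf_of_complete_convex hne.closure
    isClosed_closure.isComplete hconv.closure z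
  have hproj : ∀ w ∈ closure s, ⟪z - p, w - p⟫_ℝ ≤ 0 :=
    (norm_eq_iInf_iff_real_inner_le_zero hconv.closure hp).mp hpmin
  have hid : Metric.infDist z s ≤ ‖z - p‖ := by
    rw [← Metric.infDist_closure]
    simpa [dist_eq_norm] using Metric.infDist_le_dist_of_mem hp
  rcases eq_or_ne z p with h | h
  · have h0 : ‖z - p‖ = 0 := by rw [h, sub_self, norm_zero]
    linarith [hid]
  · set d := ‖z - p‖ with hd
    have hd0 : 0 < d := by simpa [hd, sub_eq_zero] using h
    set u := d⁻¹ • (z - p) with hu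
    have hun : ‖u‖ = 1 := by
      rw [hu, norm_smul, norm_inv, Real.norm_eq_abs, abs_of_pos hd0, ← hd, inv_mul_cancel₀ hd0.ne']
    obtain ⟨y, hy, hyr⟩ := H u hun
    have key : d ≤ ⟪u, z⟫_ℝ - ⟪u, y⟫_ℝ := by
      have h1 : ⟪u, z - p⟫_ℝ = d := by
        rw [hu, real_inner_smul_left, real_inner_self_eq_norm_sq, ← hd]
        field_simp
      have h2 : ⟪u, y - p⟫_ℝ ≤ 0 := by
        rw [hu, real_inner_smul_left]
        exact mul_nonpos_of_nonneg_of_nonpos (by positivity) (hproj y (subset_closure hy))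
      have : ⟪u, z⟫_ℝ - ⟪u, y⟫_ℝ = ⟪u, z - p⟫_ℝ - ⟪u, y - p⟫_ℝ := by
        simp [inner_sub_right]
      linarith
    exact hid.trans (by linarith)

lemma hausdorffDist_zonoid_le {μ ν : Measure (EuclideanSpace ℝ (Fin n))}
    (hμ : Integrable (fun x => x) μ) (hν : Integrable (fun x => x) ν) {r : ℝ} (hr : 0 ≤ r)
    (h : ∀ u : EuclideanSpace ℝ (Fin n), ‖u‖ = 1 →
      |(∫ x, max ⟪u, x⟫_ℝ 0 ∂μ) - ∫ x, max ⟪u, x⟫_ℝ 0 ∂ν| ≤ r) :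
    Metric.hausdorffDist (zonoid μ) (zonoid ν) ≤ r := by
  refine Metric.hausdorffDist_le_of_infDist hr (fun z hz => ?_) (fun z hz => ?_)
  · refine infDist_le_of_unit (convex_zonoid hν) ⟨0, zero_mem_zonoid ν⟩ z hr fun u hu => ?_
    obtain ⟨y, hy, hymax⟩ := exists_attain hν u
    refine ⟨y, hy, ?_⟩
    have h1 := inner_le_posinner hμ (u := u) hz
    have h2 := abs_le.mp (h u hu)
    rw [hymax]
    linarith [h2.2]
  · refine infDist_le_of_unit (convex_zonoid hμ) ⟨0, zero_mem_zonoid μ⟩ z hr fun u hu => ?_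
    obtain ⟨y, hy, hymax⟩ := exists_attain hμ u
    refine ⟨y, hy, ?_⟩
    have h1 := inner_le_posinner hν (u := u) hz
    have h2 := abs_le.mp (h u hu)
    rw [hymax]
    linarith [h2.1]

lemma posinner_lipschitz {μ : Measure (EuclideanSpace ℝ (Fin n))}
    (hμ : Integrable (fun x => x) μ) (u v : EuclideanSpace ℝ (Fin n)) :
    |(∫ x, max ⟪u, x⟫_ℝ 0 ∂μ) - ∫ x, max ⟪v, x⟫_ℝ 0 ∂μ| ≤ ‖u - v‖ * ∫ x, ‖x‖ ∂μ := by
  rw [← integral_sub (integrable_posinner hμ u) (integrable_posinner hμ v)]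
  calc |∫ x, (max ⟪u, x⟫_ℝ 0 - max ⟪v, x⟫_ℝ 0) ∂μ|
      ≤ ∫ x, ‖max ⟪u, x⟫_ℝ 0 - max ⟪v, x⟫_ℝ 0‖ ∂μ := by
        rw [← Real.norm_eq_abs]; exact norm_integral_le_integral_norm _
    _ ≤ ∫ x, ‖u - v‖ * ‖x‖ ∂μ := by
        refine integral_mono (((integrable_posinner hμ u).sub (integrable_posinner hμ v)).norm)
          (hμ.norm.const_mul _) fun x => ?_
        rw [Real.norm_eq_abs]
        calc |max ⟪u, x⟫_ℝ 0 - max ⟪v, x⟫_ℝ 0| ≤ |⟪u, x⟫_ℝ - ⟪v, x⟫_ℝ| :=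
              abs_max_sub_max_le_abs _ _ _
          _ = |⟪u - v, x⟫_ℝ| := by rw [inner_sub_left]
          _ ≤ ‖u - v‖ * ‖x‖ := abs_real_inner_le_norm _ _
    _ = ‖u - v‖ * ∫ x, ‖x‖ ∂μ := integral_const_mul _ _

lemma integrable_trunc {μ : Measure (EuclideanSpace ℝ (Fin n))}
    (hμ : Integrable (fun x => x) μ) (u : EuclideanSpace ℝ (Fin n)) {B : ℝ} (hB : 0 ≤ B) :
    Integrable (fun x => min (max ⟪u, x⟫_ℝ 0) B) μ := by
  -- note: needs 0 ≤ B from caller context via hB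
  refine Integrable.mono' (integrable_posinner hμ u)
    ((((continuous_const.inner continuous_id).max continuous_const).min
      continuous_const).aestronglyMeasurable) (ae_of_all _ fun x => ?_)
  rw [Real.norm_eq_abs, abs_le]
  constructor
  · have : (0:ℝ) ≤ max ⟪u, x⟫_ℝ 0 := le_max_right _ _
    rcases le_or_gt (max ⟪u, x⟫_ℝ 0) B with h | h
    · rw [min_eq_left h]; linarith
    · rw [min_eq_right h.le]; linarith
  · exact (min_le_left _ _)

lemma trunc_err {μ : Measure (EuclideanSpace ℝ (Fin n))}
    (hμ : Integrable (fun x => x) μ) {u : EuclideanSpace ℝ (Fin n)} {B : ℝ} (hu : ‖u‖ = 1)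
    (hB : 0 ≤ B) :
    |(∫ x, max ⟪u, x⟫_ℝ 0 ∂μ) - ∫ x, min (max ⟪u, x⟫_ℝ 0) B ∂μ|
      ≤ ∫ x in {x : EuclideanSpace ℝ (Fin n) | B ≤ ‖x‖}, ‖x‖ ∂μ := by
  have hSmeas : MeasurableSet {x : EuclideanSpace ℝ (Fin n) | B ≤ ‖x‖} :=
    (isClosed_le continuous_const continuous_norm).measurableSet
  have hle : ∀ x : EuclideanSpace ℝ (Fin n), max ⟪u, x⟫_ℝ 0 ≤ ‖x‖ := fun x => by
    rcases le_or_gt ⟪u, x⟫_ℝ 0 with h | h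
    · rw [max_eq_right h]; exact norm_nonneg x
    · rw [max_eq_left h.le]
      calc ⟪u, x⟫_ℝ ≤ ‖u‖ * ‖x‖ := real_inner_le_norm _ _
        _ = ‖x‖ := by rw [hu, one_mul]
  rw [← integral_sub (integrable_posinner hμ u) (integrable_trunc hμ u hB)]
  have hnn : ∀ x : EuclideanSpace ℝ (Fin n),
      0 ≤ max ⟪u, x⟫_ℝ 0 - min (max ⟪u, x⟫_ℝ 0) B := fun x => by
    have := min_le_left (max ⟪u, x⟫_ℝ 0) B; linarith
  rw [abs_of_nonneg (integral_nonneg hnn)]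
  calc ∫ x, (max ⟪u, x⟫_ℝ 0 - min (max ⟪u, x⟫_ℝ 0) B) ∂μ
      ≤ ∫ x, ({x : EuclideanSpace ℝ (Fin n) | B ≤ ‖x‖}.indicator (fun y => ‖y‖)) x ∂μ := by
        refine integral_mono ((integrable_posinner hμ u).sub (integrable_trunc hμ u hB))
          (hμ.norm.indicator hSmeas) fun x => ?_
        rcases le_or_gt (max ⟪u, x⟫_ℝ 0) B with h | h
        · rw [min_eq_left h, sub_self]
          exact Set.indicator_nonneg (fun y _ => norm_nonneg y) x
        · have hx : x ∈ {x : EuclideanSpace ℝ (Fin n) | B ≤ ‖x‖} :=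
            le_trans h.le (hle x)
          rw [min_eq_right h.le, Set.indicator_of_mem hx]
          have := hle x
          linarith [hB]
    _ = ∫ x in {x : EuclideanSpace ℝ (Fin n) | B ≤ ‖x‖}, ‖x‖ ∂μ := integral_indicator hSmeas

lemma tail_mono {μ : Measure (EuclideanSpace ℝ (Fin n))}
    (hμ : Integrable (fun x => x) μ) {β B : ℝ} (h : β ≤ B) :
    ∫ x in {x : EuclideanSpace ℝ (Fin n) | B ≤ ‖x‖}, ‖x‖ ∂μ
      ≤ ∫ x in {x : EuclideanSpace ℝ (Fin n) | β ≤ ‖x‖}, ‖x‖ ∂μ := by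
  refine setIntegral_mono_set hμ.norm.integrableOn (ae_of_all _ fun x => norm_nonneg x)
    (HasSubset.Subset.eventuallyLE fun x hx => le_trans h hx)

lemma tail_small {μ : Measure (EuclideanSpace ℝ (Fin n))}
    (hμ : Integrable (fun x => x) μ) {ε : ℝ} (hε : 0 < ε) :
    ∃ β : ℝ, ∫ x in {x : EuclideanSpace ℝ (Fin n) | β ≤ ‖x‖}, ‖x‖ ∂μ < ε := by
  have key : Tendsto (fun m : ℕ => ∫ x, ({x : EuclideanSpace ℝ (Fin n) | (m:ℝ) ≤ ‖x‖}.indicator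
      (fun y => ‖y‖)) x ∂μ) atTop (𝓝 (∫ _x, (0:ℝ) ∂μ)) := by
    refine tendsto_integral_of_dominated_convergence (fun x => ‖x‖)
      (fun m => (hμ.norm.indicator ((isClosed_le continuous_const
        continuous_norm).measurableSet)).aestronglyMeasurable)
      hμ.norm (fun m => ae_of_all _ fun x => ?_) (ae_of_all _ fun x => ?_)
    · rw [Real.norm_eq_abs, abs_of_nonneg (Set.indicator_nonneg (fun y _ => norm_nonneg y) x)]
      by_cases h : x ∈ {x : EuclideanSpace ℝ (Fin n) | (m:ℝ) ≤ ‖x‖}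
      · rw [Set.indicator_of_mem h]
      · rw [Set.indicator_of_notMem h]; exact norm_nonneg x
    · obtain ⟨m₀, hm₀⟩ := exists_nat_gt ‖x‖
      refine tendsto_const_nhds.congr' ?_
      filter_upwards [eventually_ge_atTop m₀] with m hm
      have : ¬ ((m:ℝ) ≤ ‖x‖) := by
        push_neg
        exact lt_of_lt_of_le hm₀ (Nat.cast_le.mpr hm)
      exact (Set.indicator_of_notMem (show x ∉ {x : EuclideanSpace ℝ (Fin n) | (m:ℝ) ≤ ‖x‖} from this) (fun y => ‖y‖)).symm
  rw [integral_zero] at key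
  obtain ⟨m, hm⟩ := ((tendsto_order.1 key).2 ε hε).exists
  refine ⟨m, ?_⟩
  rwa [integral_indicator ((isClosed_le continuous_const continuous_norm).measurableSet)] at hm

lemma moment_split {μ : Measure (EuclideanSpace ℝ (Fin n))} [IsFiniteMeasure μ]
    (hμ : Integrable (fun x => x) μ) (β : ℝ) :
    ∫ x, ‖x‖ ∂μ ≤ max β 0 * (μ Set.univ).toReal
      + ∫ x in {x : EuclideanSpace ℝ (Fin n) | β ≤ ‖x‖}, ‖x‖ ∂μ := by
  have hSmeas : MeasurableSet {x : EuclideanSpace ℝ (Fin n) | β ≤ ‖x‖} :=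
    (isClosed_le continuous_const continuous_norm).measurableSet
  have hsplit := integral_add_compl hSmeas hμ.norm
  have hcompl : ∫ x in {x : EuclideanSpace ℝ (Fin n) | β ≤ ‖x‖}ᶜ, ‖x‖ ∂μ
      ≤ max β 0 * (μ Set.univ).toReal := by
    calc ∫ x in {x : EuclideanSpace ℝ (Fin n) | β ≤ ‖x‖}ᶜ, ‖x‖ ∂μ
        ≤ ∫ _x in {x : EuclideanSpace ℝ (Fin n) | β ≤ ‖x‖}ᶜ, max β 0 ∂μ := by
          refine setIntegral_mono_on hμ.norm.integrableOn
            (integrableOn_const (measure_ne_top μ _)) hSmeas.compl fun x hx => ?_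
          have : ¬ (β ≤ ‖x‖) := hx
          exact le_trans (not_le.mp this).le (le_max_left _ _)
      _ = (μ ({x : EuclideanSpace ℝ (Fin n) | β ≤ ‖x‖}ᶜ)).toReal * max β 0 := by
          rw [setIntegral_const, smul_eq_mul]; rfl
      _ ≤ (μ Set.univ).toReal * max β 0 := by
          refine mul_le_mul_of_nonneg_right ?_ (le_max_right _ _)
          exact ENNReal.toReal_mono (measure_ne_top μ _) (measure_mono (Set.subset_univ _))
      _ = max β 0 * (μ Set.univ).toReal := mul_comm _ _
  linarith [hsplit, hcompl]

theorem zonoid_continuity {n : ℕ} (μk : ℕ → Measure (EuclideanSpace ℝ (Fin n)))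
    (μ : Measure (EuclideanSpace ℝ (Fin n)))
    [∀ k, IsFiniteMeasure (μk k)] [IsFiniteMeasure μ]
    (hint : ∀ k, Integrable (fun x => x) (μk k)) (hμ : Integrable (fun x => x) μ)
    (hui : ∀ ε > (0 : ℝ), ∃ β : ℝ, ∀ k,
      ∫ x in {x : EuclideanSpace ℝ (Fin n) | β ≤ ‖x‖}, ‖x‖ ∂(μk k) < ε)
    (hweak : ∀ f : BoundedContinuousFunction (EuclideanSpace ℝ (Fin n)) ℝ,
      Tendsto (fun k => ∫ x, f x ∂(μk k)) atTop (𝓝 (∫ x, f x ∂μ))) :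
    Tendsto (fun k => Metric.hausdorffDist (zonoid (μk k)) (zonoid μ)) atTop (𝓝 0) := by
  -- masses converge, hence bounded
  have hmass : Tendsto (fun k => ((μk k) Set.univ).toReal) atTop (𝓝 ((μ Set.univ).toReal)) := by
    have h1 := hweak (BoundedContinuousFunction.const _ (1:ℝ))
    simp [integral_const] at h1; exact h1
  obtain ⟨C, hC⟩ := hmass.bddAbove_range
  have hCb : ∀ k, ((μk k) Set.univ).toReal ≤ C := fun k => hC ⟨k, rfl⟩
  have hC0 : 0 ≤ C := le_trans ENNReal.toReal_nonneg (hCb 0)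
  obtain ⟨β₁, hβ₁⟩ := hui 1 one_pos
  set M : ℝ := max (max β₁ 0 * C + 1) (∫ x, ‖x‖ ∂μ) + 1 with hMdef
  have hMpos : 0 < M := by
    have h1 : 0 ≤ max β₁ 0 * C := mul_nonneg (le_max_right _ _) hC0
    have := le_max_left (max β₁ 0 * C + 1) (∫ x, ‖x‖ ∂μ)
    simp only [hMdef]
    linarith
  have hMk : ∀ k, ∫ x, ‖x‖ ∂(μk k) ≤ M := by
    intro k
    have h1 := moment_split (hint k) β₁
    have h2 := hβ₁ k
    have h3 : max β₁ 0 * ((μk k) Set.univ).toReal ≤ max β₁ 0 * C :=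
      mul_le_mul_of_nonneg_left (hCb k) (le_max_right _ _)
    have h4 := le_max_left (max β₁ 0 * C + 1) (∫ x, ‖x‖ ∂μ)
    simp only [hMdef]
    linarith
  have hMμ : ∫ x, ‖x‖ ∂μ ≤ M := by
    have := le_max_right (max β₁ 0 * C + 1) (∫ x, ‖x‖ ∂μ)
    simp only [hMdef]
    linarith
  -- main estimate
  rw [NormedAddCommGroup.tendsto_nhds_zero]
  intro ε hε
  have hε' : 0 < ε/10 := by linarith
  obtain ⟨β₂, hβ₂⟩ := hui (ε/10) hε'
  obtain ⟨β₃, hβ₃⟩ := tail_small hμ hε'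
  set B : ℝ := max (max β₂ β₃) 0 with hBdef
  have hB0 : (0:ℝ) ≤ B := le_max_right _ _
  have htailk : ∀ k, ∫ x in {x : EuclideanSpace ℝ (Fin n) | B ≤ ‖x‖}, ‖x‖ ∂(μk k) < ε/10 :=
    fun k => lt_of_le_of_lt
      (tail_mono (hint k) (le_trans (le_max_left β₂ β₃) (le_max_left _ _))) (hβ₂ k)
  have htailμ : ∫ x in {x : EuclideanSpace ℝ (Fin n) | B ≤ ‖x‖}, ‖x‖ ∂μ < ε/10 :=
    lt_of_le_of_lt (tail_mono hμ (le_trans (le_max_right β₂ β₃) (le_max_left _ _))) hβ₃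
  -- bounded continuous truncations
  set f : EuclideanSpace ℝ (Fin n) → BoundedContinuousFunction (EuclideanSpace ℝ (Fin n)) ℝ :=
    fun v => BoundedContinuousFunction.mkOfBound
      ⟨fun x => min (max ⟪v, x⟫_ℝ 0) B,
        ((continuous_const.inner continuous_id).max continuous_const).min continuous_const⟩
      B (fun x y => by
        rw [Real.dist_eq, abs_le]
        have hx1 : (0:ℝ) ≤ min (max ⟪v, x⟫_ℝ 0) B := le_min (le_max_right _ _) hB0
        have hy1 : (0:ℝ) ≤ min (max ⟪v, y⟫_ℝ 0) B := le_min (le_max_right _ _) hB0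
        have hx2 := min_le_right (max ⟪v, x⟫_ℝ 0) B
        have hy2 := min_le_right (max ⟪v, y⟫_ℝ 0) B
        constructor <;> simp only [ContinuousMap.coe_mk] <;> linarith) with hfdef
  have hfval : ∀ v x, f v x = min (max ⟪v, x⟫_ℝ 0) B := fun v x => rfl
  -- finite net on the sphere
  set δ : ℝ := (ε/10) / M with hδdef
  have hδ : 0 < δ := div_pos hε' hMpos
  have hcpt : IsCompact (Metric.sphere (0 : EuclideanSpace ℝ (Fin n)) 1) := isCompact_sphere _ _
  obtain ⟨t, hts, htfin, htcov⟩ := hcpt.elim_finite_subcover_image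
    (fun v _ => Metric.isOpen_ball)
    (fun v hv => Set.mem_biUnion hv (Metric.mem_ball_self hδ))
  have hev : ∀ᶠ k in atTop, ∀ v ∈ t, |(∫ x, f v x ∂(μk k)) - ∫ x, f v x ∂μ| < ε/10 := by
    rw [eventually_all_finite htfin]
    intro v hv
    have h1 := (hweak (f v)).sub_const (∫ x, f v x ∂μ)
    rw [sub_self] at h1
    have := (tendsto_order.1 h1.abs).2 (ε/10) (by simpa using hε')
    simpa using this
  filter_upwards [hev] with k hk
  rw [Real.norm_eq_abs, abs_of_nonneg Metric.hausdorffDist_nonneg]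
  have key : Metric.hausdorffDist (zonoid (μk k)) (zonoid μ) ≤ ε/2 := by
    refine hausdorffDist_zonoid_le (hint k) hμ (by linarith) fun u hu => ?_
    have husph : u ∈ Metric.sphere (0 : EuclideanSpace ℝ (Fin n)) 1 := by
      simpa [mem_sphere_iff_norm] using hu
    obtain ⟨v, hvt, huv⟩ := Set.mem_iUnion₂.1 (htcov husph)
    have hvu : ‖u - v‖ < δ := by rw [← dist_eq_norm]; exact huv
    have hv1 : ‖v‖ = 1 := by simpa [mem_sphere_iff_norm] using hts hvt
    have hδM : δ * M = ε/10 := div_mul_cancel₀ _ hMpos.ne'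
    -- five-term telescoping
    have l1 : |(∫ x, max ⟪u, x⟫_ℝ 0 ∂(μk k)) - ∫ x, max ⟪v, x⟫_ℝ 0 ∂(μk k)| ≤ ε/10 := by
      refine le_trans (posinner_lipschitz (hint k) u v) ?_
      calc ‖u - v‖ * ∫ x, ‖x‖ ∂(μk k) ≤ δ * M :=
            mul_le_mul hvu.le (hMk k) (integral_nonneg fun x => norm_nonneg x) hδ.le
        _ = ε/10 := hδM
    have l2 : |(∫ x, max ⟪v, x⟫_ℝ 0 ∂(μk k)) - ∫ x, f v x ∂(μk k)| ≤ ε/10 := by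
      have := trunc_err (hint k) hv1 hB0
      simp only [hfval]
      exact le_trans this (htailk k).le
    have l3 : |(∫ x, f v x ∂(μk k)) - ∫ x, f v x ∂μ| ≤ ε/10 := (hk v hvt).le
    have l4 : |(∫ x, f v x ∂μ) - ∫ x, max ⟪v, x⟫_ℝ 0 ∂μ| ≤ ε/10 := by
      rw [abs_sub_comm]
      have := trunc_err hμ hv1 hB0
      simp only [hfval]
      exact le_trans this htailμ.le
    have l5 : |(∫ x, max ⟪v, x⟫_ℝ 0 ∂μ) - ∫ x, max ⟪u, x⟫_ℝ 0 ∂μ| ≤ ε/10 := by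
      refine le_trans (posinner_lipschitz hμ v u) ?_
      calc ‖v - u‖ * ∫ x, ‖x‖ ∂μ ≤ δ * M := by
            rw [norm_sub_rev]
            exact mul_le_mul hvu.le hMμ (integral_nonneg fun x => norm_nonneg x) hδ.le
        _ = ε/10 := hδM
    have t1 := abs_sub_le (∫ x, max ⟪u, x⟫_ℝ 0 ∂(μk k)) (∫ x, max ⟪v, x⟫_ℝ 0 ∂(μk k))
      (∫ x, max ⟪u, x⟫_ℝ 0 ∂μ)
    have t2 := abs_sub_le (∫ x, max ⟪v, x⟫_ℝ 0 ∂(μk k)) (∫ x, f v x ∂(μk k))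
      (∫ x, max ⟪u, x⟫_ℝ 0 ∂μ)
    have t3 := abs_sub_le (∫ x, f v x ∂(μk k)) (∫ x, f v x ∂μ)
      (∫ x, max ⟪u, x⟫_ℝ 0 ∂μ)
    have t4 := abs_sub_le (∫ x, f v x ∂μ) (∫ x, max ⟪v, x⟫_ℝ 0 ∂μ)
      (∫ x, max ⟪u, x⟫_ℝ 0 ∂μ)
    linarith
  linarith [key, Metric.hausdorffDist_nonneg (s := zonoid (μk k)) (t := zonoid μ)]
end

section
/- For every non-empty compact set K ⊆ ℝⁿ, the zonoid map Φ : 𝒫(K) → 𝒵ⁿ, μ ↦ Z(μ), is continuous, where 𝒫(K) carries the topology of weak convergence and 𝒵ⁿ the topology induced by the Hausdorff metric. -/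
open MeasureTheory Pointwise Filter Topology

namespace ZonoidAux

variable {n : ℕ}

set_option linter.unusedSectionVars false

local notation "E" => EuclideanSpace ℝ (Fin n)

/-- Support function of the zonoid of `ν`. -/
noncomputable def sf (ν : Measure (EuclideanSpace ℝ (Fin n))) (u : EuclideanSpace ℝ (Fin n)) :
    ℝ :=
  ∫ x, max (inner ℝ u x : ℝ) 0 ∂ν

variable {K : Set (EuclideanSpace ℝ (Fin n))} {R : ℝ}
variable {ν : Measure (EuclideanSpace ℝ (Fin n))} [IsProbabilityMeasure ν]

lemma ae_mem (hν : ν Kᶜ = 0) : ∀ᵐ x ∂ν, x ∈ K := mem_ae_iff.mpr hν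

lemma integrable_smul (hν : ν Kᶜ = 0) (hR : ∀ x ∈ K, ‖x‖ ≤ R)
    {φ : EuclideanSpace ℝ (Fin n) → ℝ} (hm : Measurable φ)
    (hb : ∀ x, φ x ∈ Set.Icc (0 : ℝ) 1) :
    Integrable (fun x => φ x • x) ν := by
  refine (integrable_const R).mono' ((hm.smul measurable_id).aestronglyMeasurable) ?_
  filter_upwards [ae_mem hν] with x hx
  have h1 : ‖φ x • x‖ = |φ x| * ‖x‖ := by rw [norm_smul, Real.norm_eq_abs]
  have h2 : |φ x| ≤ 1 := abs_le.mpr ⟨by linarith [(hb x).1], (hb x).2⟩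
  rw [h1]
  calc |φ x| * ‖x‖ ≤ 1 * R :=
        mul_le_mul h2 (hR x hx) (norm_nonneg _) zero_le_one
    _ = R := one_mul R

lemma integrable_pos (hν : ν Kᶜ = 0) (hR : ∀ x ∈ K, ‖x‖ ≤ R)
    (u : EuclideanSpace ℝ (Fin n)) :
    Integrable (fun x => max (inner ℝ u x : ℝ) 0) ν := by
  refine (integrable_const (‖u‖ * R)).mono'
    (((continuous_const.inner continuous_id).max continuous_const).measurable.aestronglyMeasurable) ?_
  filter_upwards [ae_mem hν] with x hx
  rw [Real.norm_eq_abs, abs_of_nonneg (le_max_right _ _)]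
  refine max_le ?_ ?_
  · calc (inner ℝ u x : ℝ) ≤ ‖u‖ * ‖x‖ := real_inner_le_norm u x
      _ ≤ ‖u‖ * R := mul_le_mul_of_nonneg_left (hR x hx) (norm_nonneg u)
  · exact mul_nonneg (norm_nonneg u) ((norm_nonneg x).trans (hR x hx))

lemma inner_le_sf (hν : ν Kᶜ = 0) (hR : ∀ x ∈ K, ‖x‖ ≤ R)
    {z : EuclideanSpace ℝ (Fin n)} (hz : z ∈ zonoid ν)
    (u : EuclideanSpace ℝ (Fin n)) : (inner ℝ u z : ℝ) ≤ sf ν u := by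
  obtain ⟨φ, hm, hb, rfl⟩ := hz
  rw [← integral_inner (integrable_smul hν hR hm hb) u]
  unfold sf
  have hint : Integrable (fun x => (inner ℝ u (φ x • x) : ℝ)) ν :=
    (integrable_smul hν hR hm hb).const_inner u
  refine integral_mono hint (integrable_pos hν hR u) fun x => ?_
  rw [real_inner_smul_right]
  rcases le_or_gt 0 (inner ℝ u x : ℝ) with h | h
  · calc φ x * (inner ℝ u x : ℝ) ≤ 1 * (inner ℝ u x : ℝ) :=
        mul_le_mul_of_nonneg_right (hb x).2 h
      _ = (inner ℝ u x : ℝ) := one_mul _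
      _ ≤ max (inner ℝ u x : ℝ) 0 := le_max_left _ _
  · calc φ x * (inner ℝ u x : ℝ) ≤ 0 := mul_nonpos_of_nonneg_of_nonpos (hb x).1 h.le
      _ ≤ max (inner ℝ u x : ℝ) 0 := le_max_right _ _

lemma sf_attained (hν : ν Kᶜ = 0) (hR : ∀ x ∈ K, ‖x‖ ≤ R)
    (u : EuclideanSpace ℝ (Fin n)) :
    ∃ w ∈ zonoid ν, (inner ℝ u w : ℝ) = sf ν u := by
  set φ : EuclideanSpace ℝ (Fin n) → ℝ :=
    Set.indicator {x | (0:ℝ) < inner ℝ u x} (fun _ => (1:ℝ)) with hφ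
  have hs : MeasurableSet {x : EuclideanSpace ℝ (Fin n) | (0:ℝ) < inner ℝ u x} :=
    measurableSet_lt measurable_const (continuous_const.inner continuous_id).measurable
  have hm : Measurable φ := measurable_const.indicator hs
  have hb : ∀ x, φ x ∈ Set.Icc (0 : ℝ) 1 := by
    intro x
    by_cases h : x ∈ {x : EuclideanSpace ℝ (Fin n) | (0:ℝ) < inner ℝ u x}
    · rw [hφ, Set.indicator_of_mem h]
      exact ⟨zero_le_one, le_refl 1⟩
    · rw [hφ, Set.indicator_of_notMem h]
      exact ⟨le_refl 0, zero_le_one⟩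
  refine ⟨∫ x, φ x • x ∂ν, ⟨φ, hm, hb, rfl⟩, ?_⟩
  rw [← integral_inner (integrable_smul hν hR hm hb) u]
  unfold sf
  congr 1
  funext x
  rw [real_inner_smul_right]
  by_cases h : x ∈ {x : EuclideanSpace ℝ (Fin n) | (0:ℝ) < inner ℝ u x}
  · simp only [hφ, Set.indicator_of_mem h, one_mul]
    exact (max_eq_left (le_of_lt h)).symm
  · simp only [hφ, Set.indicator_of_notMem h, zero_mul]
    exact (max_eq_right (le_of_not_gt h)).symm

lemma zonoid_nonempty (ν : Measure (EuclideanSpace ℝ (Fin n))) :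
    (zonoid ν).Nonempty :=
  ⟨0, fun _ => 0, measurable_const, fun _ => ⟨le_refl _, zero_le_one⟩, by simp⟩

lemma zonoid_convex (hν : ν Kᶜ = 0) (hR : ∀ x ∈ K, ‖x‖ ≤ R) :
    Convex ℝ (zonoid ν) := by
  rintro z1 ⟨φ1, hm1, hb1, rfl⟩ z2 ⟨φ2, hm2, hb2, rfl⟩ a b ha hb hab
  refine ⟨fun x => a * φ1 x + b * φ2 x,
    (measurable_const.mul hm1).add (measurable_const.mul hm2), fun x => ?_, ?_⟩
  · constructor
    · exact add_nonneg (mul_nonneg ha (hb1 x).1) (mul_nonneg hb (hb2 x).1)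
    · calc a * φ1 x + b * φ2 x ≤ a * 1 + b * 1 :=
          add_le_add (mul_le_mul_of_nonneg_left (hb1 x).2 ha)
            (mul_le_mul_of_nonneg_left (hb2 x).2 hb)
        _ = 1 := by rw [mul_one, mul_one, hab]
  · have h1 := integrable_smul hν hR hm1 hb1
    have h2 := integrable_smul hν hR hm2 hb2
    have heq : (fun x => (a * φ1 x + b * φ2 x) • x)
        = (a • fun x : EuclideanSpace ℝ (Fin n) => φ1 x • x)
          + (b • fun x : EuclideanSpace ℝ (Fin n) => φ2 x • x) := by
      funext x
      simp [add_smul, mul_smul]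
    rw [heq, integral_add' (h1.smul a) (h2.smul b)]
    simp only [Pi.smul_apply, integral_smul]

lemma infDist_le_of_sf_le (hν : ν Kᶜ = 0)
    {ν' : Measure (EuclideanSpace ℝ (Fin n))} [IsProbabilityMeasure ν']
    (hν' : ν' Kᶜ = 0) (hR : ∀ x ∈ K, ‖x‖ ≤ R) {ε : ℝ} (hε : 0 ≤ ε)
    (hsf : ∀ u : EuclideanSpace ℝ (Fin n), ‖u‖ ≤ 1 → sf ν u ≤ sf ν' u + ε)
    {z : EuclideanSpace ℝ (Fin n)} (hz : z ∈ zonoid ν) :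
    Metric.infDist z (zonoid ν') ≤ ε := by
  set C := closure (zonoid ν') with hC
  have hCne : C.Nonempty := (zonoid_nonempty ν').closure
  have hCconv : Convex ℝ C := (zonoid_convex hν' hR).closure
  obtain ⟨p, hpC, hproj⟩ :=
    exists_norm_eq_iInf_of_complete_convex hCne isClosed_closure.isComplete hCconv z
  have hineq := (norm_eq_iInf_iff_real_inner_le_zero hCconv hpC).mp hproj
  have hdist : Metric.infDist z (zonoid ν') ≤ ‖z - p‖ := by
    rw [← Metric.infDist_closure]
    calc Metric.infDist z C ≤ dist z p := Metric.infDist_le_dist_of_mem hpC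
      _ = ‖z - p‖ := dist_eq_norm z p
  rcases eq_or_lt_of_le (norm_nonneg (z - p)) with h0 | h0
  · refine hdist.trans ?_
    rw [← h0]
    exact hε
  · have hne : ‖z - p‖ ≠ 0 := ne_of_gt h0
    set u := ‖z - p‖⁻¹ • (z - p) with hu
    have hune : ‖u‖ = 1 := by
      rw [hu, norm_smul, Real.norm_eq_abs, abs_of_pos (inv_pos.mpr h0)]
      field_simp
    obtain ⟨w, hw, hwsf⟩ := sf_attained hν' hR u
    have hwp : (inner ℝ u w : ℝ) ≤ (inner ℝ u p : ℝ) := by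
      have h1 := hineq w (subset_closure hw)
      have h2 : (inner ℝ u (w - p) : ℝ) ≤ 0 := by
        rw [hu, real_inner_smul_left]
        exact mul_nonpos_of_nonneg_of_nonpos (inv_pos.mpr h0).le h1
      rw [inner_sub_right] at h2
      linarith
    have huz : (inner ℝ u z : ℝ) ≤ sf ν u := inner_le_sf hν hR hz u
    have hdu : (inner ℝ u (z - p) : ℝ) = ‖z - p‖ := by
      rw [hu, real_inner_smul_left, real_inner_self_eq_norm_mul_norm]
      field_simp
    have hfin : ‖z - p‖ ≤ ε := by
      rw [inner_sub_right] at hdu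
      have h3 : sf ν' u = (inner ℝ u w : ℝ) := hwsf.symm
      have h4 := hsf u hune.le
      linarith
    exact hdist.trans hfin

lemma sf_lipschitz (hν : ν Kᶜ = 0) (hR : ∀ x ∈ K, ‖x‖ ≤ R)
    (u v : EuclideanSpace ℝ (Fin n)) : |sf ν u - sf ν v| ≤ R * ‖u - v‖ := by
  have h1 := integrable_pos hν hR u
  have h2 := integrable_pos hν hR v
  have heq : sf ν u - sf ν v
      = ∫ x, (max (inner ℝ u x : ℝ) 0 - max (inner ℝ v x : ℝ) 0) ∂ν :=
    (integral_sub h1 h2).symm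
  rw [heq, ← Real.norm_eq_abs]
  have hbound : ∀ᵐ x ∂ν,
      ‖max (inner ℝ u x : ℝ) 0 - max (inner ℝ v x : ℝ) 0‖ ≤ R * ‖u - v‖ := by
    filter_upwards [ae_mem hν] with x hx
    rw [Real.norm_eq_abs]
    calc |max (inner ℝ u x : ℝ) 0 - max (inner ℝ v x : ℝ) 0|
        ≤ |(inner ℝ u x : ℝ) - (inner ℝ v x : ℝ)| := abs_max_sub_max_le_abs _ _ _
      _ = |(inner ℝ (u - v) x : ℝ)| := by rw [inner_sub_left]
      _ ≤ ‖u - v‖ * ‖x‖ := abs_real_inner_le_norm _ _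
      _ ≤ ‖u - v‖ * R := mul_le_mul_of_nonneg_left (hR x hx) (norm_nonneg _)
      _ = R * ‖u - v‖ := mul_comm _ _
  calc ‖∫ x, (max (inner ℝ u x : ℝ) 0 - max (inner ℝ v x : ℝ) 0) ∂ν‖
      ≤ ∫ _, R * ‖u - v‖ ∂ν := norm_integral_le_of_norm_le (integrable_const _) hbound
    _ = R * ‖u - v‖ := by simp

end ZonoidAux

open ZonoidAux in
theorem zonoid_map_continuous_on_compact {n : ℕ} (K : Set (EuclideanSpace ℝ (Fin n)))
    (hK : IsCompact K) (hKne : K.Nonempty)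
    (μk : ℕ → ProbabilityMeasure (EuclideanSpace ℝ (Fin n)))
    (μ : ProbabilityMeasure (EuclideanSpace ℝ (Fin n)))
    (hsupp : ∀ k, (μk k : Measure (EuclideanSpace ℝ (Fin n))) Kᶜ = 0)
    (hsuppμ : (μ : Measure (EuclideanSpace ℝ (Fin n))) Kᶜ = 0)
    (hconv : Tendsto μk atTop (𝓝 μ)) :
    Tendsto (fun k => Metric.hausdorffDist
      (zonoid (μk k : Measure (EuclideanSpace ℝ (Fin n))))
      (zonoid (μ : Measure (EuclideanSpace ℝ (Fin n))))) atTop (𝓝 0) := by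
  classical
  obtain ⟨R, hRK⟩ := hK.isBounded.subset_closedBall (0 : EuclideanSpace ℝ (Fin n))
  have hR : ∀ x ∈ K, ‖x‖ ≤ R := fun x hx => mem_closedBall_zero_iff.mp (hRK hx)
  have hR0 : (0:ℝ) ≤ R := by
    obtain ⟨x0, hx0⟩ := hKne
    exact (norm_nonneg x0).trans (hR x0 hx0)
  -- pointwise convergence of support functions
  have hpt : ∀ u : EuclideanSpace ℝ (Fin n),
      Tendsto (fun k => sf (μk k : Measure (EuclideanSpace ℝ (Fin n))) u) atTop
        (𝓝 (sf (μ : Measure (EuclideanSpace ℝ (Fin n))) u)) := by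
    intro u
    set M := ‖u‖ * R with hM
    have hM0 : 0 ≤ M := mul_nonneg (norm_nonneg u) hR0
    have hcont : Continuous fun x : EuclideanSpace ℝ (Fin n) =>
        min (max (inner ℝ u x : ℝ) 0) M :=
      ((continuous_const.inner continuous_id).max continuous_const).min continuous_const
    have hbd : ∀ x : EuclideanSpace ℝ (Fin n), ‖min (max (inner ℝ u x : ℝ) 0) M‖ ≤ M := by
      intro x
      rw [Real.norm_eq_abs, abs_of_nonneg (le_min (le_max_right _ _) hM0)]
      exact min_le_right _ _
    set f : BoundedContinuousFunction (EuclideanSpace ℝ (Fin n)) ℝ :=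
      BoundedContinuousFunction.ofNormedAddCommGroup _ hcont M hbd with hf
    have hfx : ∀ x, f x = min (max (inner ℝ u x : ℝ) 0) M := fun x => rfl
    have hkey : ∀ (ν : Measure (EuclideanSpace ℝ (Fin n))) [IsProbabilityMeasure ν],
        ν Kᶜ = 0 → ∫ x, f x ∂ν = sf ν u := by
      intro ν _ hν
      refine integral_congr_ae ?_
      filter_upwards [ae_mem hν] with x hx
      rw [hfx]
      refine min_eq_left (max_le ?_ hM0)
      calc (inner ℝ u x : ℝ) ≤ ‖u‖ * ‖x‖ := real_inner_le_norm u x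
        _ ≤ ‖u‖ * R := mul_le_mul_of_nonneg_left (hR x hx) (norm_nonneg u)
    have htend := ProbabilityMeasure.tendsto_iff_forall_integral_tendsto.mp hconv f
    rw [hkey (μ : Measure (EuclideanSpace ℝ (Fin n))) hsuppμ] at htend
    refine htend.congr fun k => ?_
    exact hkey (μk k : Measure (EuclideanSpace ℝ (Fin n))) (hsupp k)
  -- uniform convergence on the unit ball
  have hunif : ∀ ε > (0:ℝ), ∀ᶠ k in atTop, ∀ u : EuclideanSpace ℝ (Fin n), ‖u‖ ≤ 1 →
      |sf (μk k : Measure (EuclideanSpace ℝ (Fin n))) u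
        - sf (μ : Measure (EuclideanSpace ℝ (Fin n))) u| ≤ ε := by
    intro ε hε
    set δ := ε / (3 * (R + 1)) with hδ
    have hδ0 : 0 < δ := div_pos hε (by linarith)
    have hRδ : R * δ ≤ ε / 3 := by
      have h1 : (0:ℝ) < 3 * (R + 1) := by linarith
      rw [hδ, mul_div_assoc', div_le_div_iff₀ h1 (by norm_num : (0:ℝ) < 3)]
      nlinarith
    have hcover : Metric.closedBall (0 : EuclideanSpace ℝ (Fin n)) 1 ⊆
        ⋃ t ∈ Metric.closedBall (0 : EuclideanSpace ℝ (Fin n)) 1, Metric.ball t δ :=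
      fun t ht => Set.mem_biUnion ht (Metric.mem_ball_self hδ0)
    obtain ⟨T, hTsub, hTfin, hTcover⟩ :=
      (isCompact_closedBall (0 : EuclideanSpace ℝ (Fin n)) 1).elim_finite_subcover_image
        (fun t _ => Metric.isOpen_ball) hcover
    have hev : ∀ᶠ k in atTop, ∀ t ∈ T,
        |sf (μk k : Measure (EuclideanSpace ℝ (Fin n))) t
          - sf (μ : Measure (EuclideanSpace ℝ (Fin n))) t| ≤ ε / 3 := by
      rw [Filter.eventually_all_finite hTfin]
      intro t _
      have hnb : ∀ᶠ x in 𝓝 (sf (μ : Measure (EuclideanSpace ℝ (Fin n))) t),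
          |x - sf (μ : Measure (EuclideanSpace ℝ (Fin n))) t| ≤ ε / 3 := by
        filter_upwards [Metric.closedBall_mem_nhds
          (sf (μ : Measure (EuclideanSpace ℝ (Fin n))) t) (by linarith : (0:ℝ) < ε/3)]
          with x hx
        rw [Metric.mem_closedBall, Real.dist_eq] at hx
        exact hx
      exact (hpt t).eventually hnb
    filter_upwards [hev] with k hk
    intro u hu
    have huB : u ∈ Metric.closedBall (0 : EuclideanSpace ℝ (Fin n)) 1 :=
      mem_closedBall_zero_iff.mpr hu
    obtain ⟨t, ht, hut⟩ := Set.mem_iUnion₂.mp (hTcover huB)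
    have hdut : ‖u - t‖ < δ := by
      rw [← dist_eq_norm]
      exact hut
    have hlip1 := sf_lipschitz (hsupp k) hR u t
    have hlip2 := sf_lipschitz hsuppμ hR t u
    rw [norm_sub_rev] at hlip2
    have hRut : R * ‖u - t‖ ≤ ε / 3 :=
      le_trans (mul_le_mul_of_nonneg_left hdut.le hR0) hRδ
    have h1 := hk t ht
    have habs1 := abs_sub_le (sf (μk k : Measure (EuclideanSpace ℝ (Fin n))) u)
      (sf (μk k : Measure (EuclideanSpace ℝ (Fin n))) t)
      (sf (μ : Measure (EuclideanSpace ℝ (Fin n))) u)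
    have habs2 := abs_sub_le (sf (μk k : Measure (EuclideanSpace ℝ (Fin n))) t)
      (sf (μ : Measure (EuclideanSpace ℝ (Fin n))) t)
      (sf (μ : Measure (EuclideanSpace ℝ (Fin n))) u)
    linarith
  -- conclusion
  rw [Metric.tendsto_atTop]
  intro ε hε
  obtain ⟨N, hN⟩ := Filter.eventually_atTop.mp (hunif (ε/2) (by linarith))
  refine ⟨N, fun k hk => ?_⟩
  have hkk := hN k hk
  have hdir1 : ∀ u : EuclideanSpace ℝ (Fin n), ‖u‖ ≤ 1 →
      sf (μk k : Measure (EuclideanSpace ℝ (Fin n))) u ≤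
        sf (μ : Measure (EuclideanSpace ℝ (Fin n))) u + ε/2 := by
    intro u hu
    have := abs_le.mp (hkk u hu)
    linarith [this.2]
  have hdir2 : ∀ u : EuclideanSpace ℝ (Fin n), ‖u‖ ≤ 1 →
      sf (μ : Measure (EuclideanSpace ℝ (Fin n))) u ≤
        sf (μk k : Measure (EuclideanSpace ℝ (Fin n))) u + ε/2 := by
    intro u hu
    have := abs_le.mp (hkk u hu)
    linarith [this.1]
  have hle1 : ∀ z ∈ zonoid (μk k : Measure (EuclideanSpace ℝ (Fin n))),
      Metric.infDist z (zonoid (μ : Measure (EuclideanSpace ℝ (Fin n)))) ≤ ε/2 :=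
    fun z hz => infDist_le_of_sf_le (hsupp k) hsuppμ hR (by linarith) hdir1 hz
  have hle2 : ∀ z ∈ zonoid (μ : Measure (EuclideanSpace ℝ (Fin n))),
      Metric.infDist z (zonoid (μk k : Measure (EuclideanSpace ℝ (Fin n)))) ≤ ε/2 :=
    fun z hz => infDist_le_of_sf_le hsuppμ (hsupp k) hR (by linarith) hdir2 hz
  have hhd := Metric.hausdorffDist_le_of_infDist (by linarith : (0:ℝ) ≤ ε/2) hle1 hle2
  rw [Real.dist_eq, sub_zero, abs_of_nonneg Metric.hausdorffDist_nonneg]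
  linarith
end

section
/- Let (μ_k) and μ be Borel probability measures with finite first moment supported in the non-negative octant ℝⁿ₊. If μ_k converges weakly to μ and the first moments m(μ_k) converge to m(μ) in ℝⁿ, then Z(μ_k) converges to Z(μ) in the Hausdorff metric. -/
open MeasureTheory Pointwise Filter Topology
open scoped RealInnerProductSpace

/-- The non-negative octant of `ℝⁿ`. -/
def octant (n : ℕ) : Set (EuclideanSpace ℝ (Fin n)) := {x | ∀ i, 0 ≤ x i}

section Aux

variable {n : ℕ}

local notation "E" => EuclideanSpace ℝ (Fin n)

/-- support-type function -/
noncomputable def zS (μ : Measure E) (u : E) : ℝ := ∫ x, max ⟪u, x⟫ 0 ∂μ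

lemma pos_cont (u : E) : Continuous fun x : E => max ⟪u, x⟫ 0 :=
  ((innerSL ℝ u).continuous).max continuous_const

lemma pos_abs_le (u x : E) : |max ⟪u, x⟫ 0| ≤ ‖u‖ * ‖x‖ := by
  rw [abs_le]
  constructor
  · have := abs_real_inner_le_norm u x
    have h0 : (0:ℝ) ≤ ‖u‖ * ‖x‖ := by positivity
    nlinarith [le_max_right ⟪u,x⟫ (0:ℝ), le_max_left ⟪u,x⟫ (0:ℝ), abs_le.1 this]
  · have := abs_real_inner_le_norm u x
    have := abs_le.1 this
    exact max_le this.2 (by positivity)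

lemma pos_integrable {μ : Measure E} (hμ : Integrable (fun x => x) μ) (u : E) :
    Integrable (fun x => max ⟪u, x⟫ 0) μ := by
  refine Integrable.mono' (hμ.norm.const_mul ‖u‖) ((pos_cont u).aestronglyMeasurable) ?_
  exact Filter.Eventually.of_forall fun x => by simpa using pos_abs_le u x

lemma phi_smul_integrable {μ : Measure E} (hμ : Integrable (fun x => x) μ)
    {φ : E → ℝ} (hm : Measurable φ) (h01 : ∀ x, φ x ∈ Set.Icc (0:ℝ) 1) :
    Integrable (fun x => φ x • x) μ := by
  refine Integrable.mono' hμ.norm ((hm.smul measurable_id).aestronglyMeasurable) ?_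
  refine Filter.Eventually.of_forall fun x => ?_
  rw [norm_smul]
  have := (h01 x).1; have := (h01 x).2
  have : |φ x| ≤ 1 := abs_le.2 ⟨by linarith, by linarith⟩
  calc ‖φ x‖ * ‖x‖ ≤ 1 * ‖x‖ := by
        exact mul_le_mul_of_nonneg_right this (norm_nonneg x)
    _ = ‖x‖ := one_mul _

lemma inner_le_zS {μ : Measure E} (hμ : Integrable (fun x => x) μ) {z : E}
    (hz : z ∈ zonoid μ) (u : E) : ⟪u, z⟫ ≤ zS μ u := by
  obtain ⟨φ, hm, h01, rfl⟩ := hz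
  rw [← integral_inner (phi_smul_integrable hμ hm h01) u]
  refine integral_mono ?_ (pos_integrable hμ u) fun x => ?_
  · exact ((innerSL ℝ u).integrable_comp (phi_smul_integrable hμ hm h01))
  · simp only [real_inner_smul_right]
    rcases le_or_gt ⟪u, x⟫ 0 with h | h
    · have := (h01 x).1
      have : φ x * ⟪u, x⟫ ≤ 0 := mul_nonpos_of_nonneg_of_nonpos this h
      exact this.trans (le_max_right _ _)
    · have h2 := (h01 x).2
      calc φ x * ⟪u, x⟫ ≤ 1 * ⟪u, x⟫ := mul_le_mul_of_nonneg_right h2 h.le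
        _ = ⟪u, x⟫ := one_mul _
        _ ≤ max ⟪u, x⟫ 0 := le_max_left _ _

lemma exists_mem_zonoid_inner_eq {μ : Measure E} (hμ : Integrable (fun x => x) μ) (u : E) :
    ∃ z ∈ zonoid μ, ⟪u, z⟫ = zS μ u := by
  classical
  set φ : E → ℝ := fun x => if 0 < ⟪u, x⟫ then 1 else 0 with hφ
  have hm : Measurable φ := by
    refine Measurable.ite ?_ measurable_const measurable_const
    exact measurableSet_lt measurable_const ((innerSL ℝ u).continuous.measurable)
  have h01 : ∀ x, φ x ∈ Set.Icc (0:ℝ) 1 := fun x => by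
    by_cases h : 0 < ⟪u, x⟫
    · simp only [hφ, if_pos h]; exact ⟨zero_le_one, le_refl 1⟩
    · simp only [hφ, if_neg h]; exact ⟨le_refl 0, zero_le_one⟩
  refine ⟨∫ x, φ x • x ∂μ, ⟨φ, hm, h01, rfl⟩, ?_⟩
  rw [← integral_inner (phi_smul_integrable hμ hm h01) u]
  unfold zS
  congr 1
  ext x
  simp only [real_inner_smul_right, hφ]
  by_cases h : 0 < ⟪u, x⟫
  · rw [if_pos h, one_mul, max_eq_left h.le]
  · push_neg at h
    rw [if_neg (not_lt.2 h), zero_mul, max_eq_right h]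

lemma zonoid_nonempty (μ : Measure E) : (zonoid μ).Nonempty :=
  ⟨0, ⟨fun _ => 0, measurable_const, fun x => by simp, by simp⟩⟩

lemma zonoid_convex {μ : Measure E} (hμ : Integrable (fun x => x) μ) :
    Convex ℝ (zonoid μ) := by
  rintro z₁ ⟨φ₁, hm₁, h₁, rfl⟩ z₂ ⟨φ₂, hm₂, h₂, rfl⟩ a b ha hb hab
  refine ⟨fun x => a * φ₁ x + b * φ₂ x, (hm₁.const_mul a).add (hm₂.const_mul b),
    fun x => ?_, ?_⟩
  · constructor
    · have := (h₁ x).1; have := (h₂ x).1; positivity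
    · have := (h₁ x).2; have := (h₂ x).2
      have h1a := (h₁ x).1; have h2a := (h₂ x).1
      simp only
      nlinarith
  · have i₁ := phi_smul_integrable hμ hm₁ h₁
    have i₂ := phi_smul_integrable hμ hm₂ h₂
    have ia : Integrable (fun x => a • (φ₁ x • x)) μ := by
      exact i₁.smul a
    have ib : Integrable (fun x => b • (φ₂ x • x)) μ := by
      exact i₂.smul b
    rw [← integral_smul a, ← integral_smul b, ← integral_add ia ib]
    refine integral_congr_ae (Filter.Eventually.of_forall fun x => ?_)
    simp only [Pi.add_apply, Pi.smul_apply, smul_smul]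
    rw [add_smul]

lemma zonoid_norm_le {μ : Measure E} (hμ : Integrable (fun x => x) μ) {z : E}
    (hz : z ∈ zonoid μ) : ‖z‖ ≤ ∫ x, ‖x‖ ∂μ := by
  obtain ⟨φ, hm, h01, rfl⟩ := hz
  calc ‖∫ x, φ x • x ∂μ‖ ≤ ∫ x, ‖φ x • x‖ ∂μ := norm_integral_le_integral_norm _
    _ ≤ ∫ x, ‖x‖ ∂μ := by
        refine integral_mono ((phi_smul_integrable hμ hm h01).norm) hμ.norm fun x => ?_
        rw [norm_smul]
        have h2 := (h01 x).2; have h1 := (h01 x).1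
        have : ‖φ x‖ ≤ 1 := by rw [Real.norm_eq_abs]; exact abs_le.2 ⟨by linarith, h2⟩
        nlinarith [norm_nonneg x]

/-- separation lemma -/
lemma sep_lemma {F : Type*} [NormedAddCommGroup F] [InnerProductSpace ℝ F]
    [FiniteDimensional ℝ F] {K : Set F} (hKc : IsCompact K) (hKconv : Convex ℝ K)
    (z : F) {ε : ℝ} (hε : 0 ≤ ε)
    (h : ∀ v : F, ∃ y ∈ K, ⟪v, z⟫ ≤ ⟪v, y⟫ + ε * ‖v‖) :
    Metric.infDist z K ≤ ε := by
  by_contra hcon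
  push_neg at hcon
  set B : Set F := K + Metric.closedBall (0:F) ε with hB
  have hBc : IsCompact B := hKc.add (isCompact_closedBall 0 ε)
  have hBconv : Convex ℝ B := hKconv.add (convex_closedBall 0 ε)
  have hzB : z ∉ B := by
    rintro ⟨y, hy, b, hb, rfl⟩
    have : dist (y + b) y ≤ ε := by
      simpa [dist_eq_norm] using mem_closedBall_zero_iff.1 hb
    have h2 : Metric.infDist (y + b) K ≤ dist (y + b) y := Metric.infDist_le_dist_of_mem hy
    linarith
  obtain ⟨f, c, hfB, hfz⟩ := geometric_hahn_banach_closed_point hBconv hBc.isClosed hzB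
  set v : F := (InnerProductSpace.toDual ℝ F).symm f with hv
  have hvf : ∀ x : F, ⟪v, x⟫ = f x := fun x => InnerProductSpace.toDual_symm_apply
  obtain ⟨y, hy, hle⟩ := h v
  have hyB : ∀ b ∈ Metric.closedBall (0:F) ε, y + b ∈ B := fun b hb => ⟨y, hy, b, hb, rfl⟩
  have hvne : v ≠ 0 := by
    intro h0
    have h1 : f y < c := by
      have := hfB _ (hyB 0 (by simp [hε]))
      simpa using this
    have h2 : c < f z := hfz
    rw [← hvf y, ← hvf z, h0] at *
    simp [inner_zero_left] at h1 h2
    linarith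
  have hb : (ε * ‖v‖⁻¹) • v ∈ Metric.closedBall (0:F) ε := by
    rw [mem_closedBall_zero_iff, norm_smul]
    have : ‖v‖ ≠ 0 := norm_ne_zero_iff.2 hvne
    rw [Real.norm_eq_abs, abs_of_nonneg (by positivity)]
    field_simp
    exact le_rfl
  have key : f (y + (ε * ‖v‖⁻¹) • v) = f y + ε * ‖v‖ := by
    rw [← hvf, ← hvf, inner_add_right, real_inner_smul_right, real_inner_self_eq_norm_sq]
    have : ‖v‖ ≠ 0 := norm_ne_zero_iff.2 hvne
    field_simp
  have h1 : f (y + (ε * ‖v‖⁻¹) • v) < c := hfB _ (hyB _ hb)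
  have h2 : c < f z := hfz
  rw [key] at h1
  rw [← hvf z, ← hvf y] at *
  linarith

noncomputable def onesE : EuclideanSpace ℝ (Fin n) := WithLp.toLp 2 (fun _ => (1:ℝ))

lemma inner_onesE (x : E) : ⟪(onesE : E), x⟫ = ∑ i, x i := by
  simp [PiLp.inner_apply, onesE, RCLike.inner_apply]

lemma ae_octant {ν : Measure E} (h : ν (octant n)ᶜ = 0) : ∀ᵐ x ∂ν, x ∈ octant n :=
  mem_ae_iff.2 h

lemma norm_le_sum {x : E} (hx : x ∈ octant n) : ‖x‖ ≤ ∑ i, x i := by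
  have h1 : ‖x‖ = Real.sqrt (∑ i, x i ^ 2) := by
    rw [EuclideanSpace.norm_eq]
    congr 1
    refine Finset.sum_congr rfl fun i _ => ?_
    rw [Real.norm_eq_abs, sq_abs]
  rw [h1]
  have h2 : ∑ i, x i ^ 2 ≤ (∑ i, x i) ^ 2 :=
    Finset.sum_sq_le_sq_sum_of_nonneg (fun i _ => hx i)
  calc Real.sqrt (∑ i, x i ^ 2) ≤ Real.sqrt ((∑ i, x i) ^ 2) := Real.sqrt_le_sqrt h2
    _ = |∑ i, x i| := Real.sqrt_sq_eq_abs _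
    _ = ∑ i, x i := abs_of_nonneg (Finset.sum_nonneg fun i _ => hx i)

noncomputable def wfun : EuclideanSpace ℝ (Fin n) → ℝ := fun x => ⟪(onesE : E), x⟫

lemma wfun_cont : Continuous (wfun (n := n)) := (innerSL ℝ (onesE : E)).continuous

lemma wfun_integrable {ν : Measure E} (hν : Integrable (fun x => x) ν) :
    Integrable (wfun (n := n)) ν := by
  refine Integrable.mono' (hν.norm.const_mul ‖(onesE : E)‖)
    (wfun_cont.aestronglyMeasurable) (Filter.Eventually.of_forall fun x => ?_)
  simpa [wfun] using abs_real_inner_le_norm (onesE : E) x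

lemma integral_wfun_eq {ν : Measure E} (hν : Integrable (fun x => x) ν) :
    ∫ x, wfun x ∂ν = ⟪(onesE : E), ∫ x, x ∂ν⟫ :=
  integral_inner hν (onesE : E)

lemma wfun_nonneg {x : E} (hx : x ∈ octant n) : 0 ≤ wfun x := by
  rw [wfun, inner_onesE]; exact Finset.sum_nonneg fun i _ => hx i

lemma norm_le_wfun {x : E} (hx : x ∈ octant n) : ‖x‖ ≤ wfun x := by
  rw [wfun, inner_onesE]; exact norm_le_sum hx

noncomputable def truncF (R : ℝ) : EuclideanSpace ℝ (Fin n) → ℝ :=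
  fun x => max (min (wfun x) R) 0

lemma truncF_cont (R : ℝ) : Continuous (truncF (n := n) R) :=
  (wfun_cont.min continuous_const).max continuous_const

lemma truncF_bdd {R : ℝ} (hR : 0 ≤ R) (x : E) : ‖truncF R x‖ ≤ R := by
  rw [Real.norm_eq_abs, abs_of_nonneg (le_max_right _ _)]
  exact max_le ((min_le_right _ _)) hR

lemma truncF_le_wfun {R : ℝ} {x : E} (hx : x ∈ octant n) : truncF R x ≤ wfun x :=
  max_le (min_le_left _ _) (wfun_nonneg hx)

lemma truncF_abs_le (R : ℝ) (x : E) : ‖truncF R x‖ ≤ |wfun x| + 1 := by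
  rw [Real.norm_eq_abs, abs_of_nonneg (le_max_right _ _)]
  have h1 : min (wfun x) R ≤ |wfun x| + 1 := (min_le_left _ _).trans
    ((le_abs_self _).trans (by linarith))
  exact max_le h1 (by positivity)

lemma tendsto_truncF_integral {ν : Measure E} [IsProbabilityMeasure ν]
    (hν : Integrable (fun x => x) ν)
    (hso : ν (octant n)ᶜ = 0) :
    Tendsto (fun R : ℕ => ∫ x, truncF R x ∂ν) atTop (𝓝 (∫ x, wfun x ∂ν)) := by
  refine tendsto_integral_of_dominated_convergence (fun x => |wfun x| + 1)
    (fun R => (truncF_cont R).aestronglyMeasurable)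
    (((wfun_integrable hν).abs).add (integrable_const 1)) ?_ ?_
  · intro R
    exact Filter.Eventually.of_forall fun x => truncF_abs_le R x
  · filter_upwards [ae_octant hso] with x hx
    have h0 : 0 ≤ wfun x := wfun_nonneg hx
    have : ∀ᶠ R : ℕ in atTop, truncF (R:ℝ) x = wfun x := by
      filter_upwards [eventually_ge_atTop ⌈wfun x⌉₊] with R hR
      have : wfun x ≤ (R:ℝ) := (Nat.le_ceil _).trans (Nat.cast_le.2 hR)
      rw [truncF, min_eq_left this, max_eq_left h0]
    exact Tendsto.congr' (this.mono fun R h => h.symm) tendsto_const_nhds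

lemma zS_zero (ν : Measure E) : zS ν 0 = 0 := by
  simp [zS]

lemma zS_smul (ν : Measure E) {t : ℝ} (ht : 0 ≤ t) (u : E) :
    zS ν (t • u) = t * zS ν u := by
  unfold zS
  rw [← integral_const_mul]
  congr 1
  funext x
  rw [real_inner_smul_left, mul_max_of_nonneg _ _ ht, mul_zero]

lemma zS_lipschitz {ν : Measure E} (hν : Integrable (fun x => x) ν) (u v : E) :
    |zS ν u - zS ν v| ≤ ‖u - v‖ * ∫ x, ‖x‖ ∂ν := by
  have h1 : zS ν u - zS ν v = ∫ x, (max ⟪u,x⟫ 0 - max ⟪v,x⟫ 0) ∂ν :=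
    (integral_sub (pos_integrable hν u) (pos_integrable hν v)).symm
  rw [h1, ← Real.norm_eq_abs]
  calc ‖∫ x, (max ⟪u,x⟫ 0 - max ⟪v,x⟫ 0) ∂ν‖
      ≤ ∫ x, ‖max ⟪u,x⟫ 0 - max ⟪v,x⟫ 0‖ ∂ν := norm_integral_le_integral_norm _
    _ ≤ ∫ x, ‖u - v‖ * ‖x‖ ∂ν := by
        refine integral_mono (((pos_integrable hν u).sub (pos_integrable hν v)).norm)
          (hν.norm.const_mul ‖u - v‖) fun x => ?_
        rw [Real.norm_eq_abs]
        calc |max ⟪u,x⟫ 0 - max ⟪v,x⟫ 0| ≤ |⟪u,x⟫ - ⟪v,x⟫| := abs_max_sub_max_le_abs _ _ _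
          _ = |⟪u - v, x⟫| := by rw [inner_sub_left]
          _ ≤ ‖u - v‖ * ‖x‖ := abs_real_inner_le_norm _ _
    _ = ‖u - v‖ * ∫ x, ‖x‖ ∂ν := integral_const_mul _ _

end Aux

section Conv

variable {n : ℕ}
local notation "E" => EuclideanSpace ℝ (Fin n)

lemma wfun_integral_tendsto (μk : ℕ → Measure E) (μ : Measure E)
    (hint : ∀ k, Integrable (fun x => x) (μk k)) (hμ : Integrable (fun x => x) μ)
    (hmean : Tendsto (fun k => ∫ x, x ∂(μk k)) atTop (𝓝 (∫ x, x ∂μ))) :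
    Tendsto (fun k => ∫ x, wfun x ∂(μk k)) atTop (𝓝 (∫ x, wfun x ∂μ)) := by
  have h2 : (fun k => ∫ x, wfun x ∂(μk k)) = fun k => ⟪(onesE : E), ∫ x, x ∂(μk k)⟫ :=
    funext fun k => integral_wfun_eq (hint k)
  rw [h2, integral_wfun_eq hμ]
  exact tendsto_const_nhds.inner hmean

lemma zS_tendsto (μk : ℕ → Measure E) (μ : Measure E)
    [∀ k, IsProbabilityMeasure (μk k)] [IsProbabilityMeasure μ]
    (hint : ∀ k, Integrable (fun x => x) (μk k)) (hμ : Integrable (fun x => x) μ)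
    (hsupp : ∀ k, μk k (octant n)ᶜ = 0) (hsuppμ : μ (octant n)ᶜ = 0)
    (hweak : ∀ f : BoundedContinuousFunction (EuclideanSpace ℝ (Fin n)) ℝ,
      Tendsto (fun k => ∫ x, f x ∂(μk k)) atTop (𝓝 (∫ x, f x ∂μ)))
    (hmean : Tendsto (fun k => ∫ x, x ∂(μk k)) atTop (𝓝 (∫ x, x ∂μ)))
    (u : E) : Tendsto (fun k => zS (μk k) u) atTop (𝓝 (zS μ u)) := by
  refine Metric.tendsto_nhds.2 fun ε hε => ?_
  set c := ‖u‖ with hc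
  have hc0 : 0 ≤ c := norm_nonneg u
  set δ := ε / (3 * c + 2) with hδdef
  have hδ : 0 < δ := div_pos hε (by linarith)
  have hεδ : ε = (3 * c + 2) * δ := by
    rw [hδdef]; field_simp
  -- choose R
  obtain ⟨R, hRe⟩ := (Metric.tendsto_nhds.1 (tendsto_truncF_integral hμ hsuppμ) δ hδ).exists
  rw [Real.dist_eq] at hRe
  set g := fun x : E => max ⟪u, x⟫ 0 with hg
  have hgnonneg : ∀ x, 0 ≤ g x := fun x => le_max_right _ _
  -- bounded continuous versions
  set tB : BoundedContinuousFunction (EuclideanSpace ℝ (Fin n)) ℝ :=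
    BoundedContinuousFunction.ofNormedAddCommGroup (truncF (R:ℝ)) (truncF_cont _)
      (R:ℝ) (truncF_bdd (Nat.cast_nonneg R)) with htB
  have tB_apply : ∀ x, tB x = truncF (R:ℝ) x := fun x => rfl
  have truncF_nonneg : ∀ x : E, 0 ≤ truncF (R:ℝ) x := fun x => le_max_right _ _
  set gB : BoundedContinuousFunction (EuclideanSpace ℝ (Fin n)) ℝ :=
    BoundedContinuousFunction.ofNormedAddCommGroup
      (fun x => min (g x) (c * truncF (R:ℝ) x))
      ((pos_cont u).min (continuous_const.mul (truncF_cont _))) (c * R)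
      (by
        intro x
        rw [Real.norm_eq_abs, abs_of_nonneg (le_min (hgnonneg x)
          (mul_nonneg hc0 (truncF_nonneg x)))]
        exact (min_le_right _ _).trans
          (mul_le_mul_of_nonneg_left (truncF_bdd (Nat.cast_nonneg R) x |>.trans_eq' (by
            rw [Real.norm_eq_abs, abs_of_nonneg (truncF_nonneg x)]) |>.trans_eq rfl) hc0)) with hgB
  have gB_apply : ∀ x, gB x = min (g x) (c * truncF (R:ℝ) x) := fun x => rfl
  -- key inequality
  have key : ∀ ν : Measure E, IsProbabilityMeasure ν → Integrable (fun x => x) ν →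
      ν (octant n)ᶜ = 0 →
      (∫ x, gB x ∂ν ≤ ∫ x, g x ∂ν ∧
        ∫ x, g x ∂ν - ∫ x, gB x ∂ν ≤ c * (∫ x, wfun x ∂ν - ∫ x, tB x ∂ν)) := by
    intro ν hp hi ho
    haveI := hp
    have hgi : Integrable g ν := pos_integrable hi u
    have hgBi : Integrable (fun x => gB x) ν := gB.integrable ν
    have htBi : Integrable (fun x => tB x) ν := tB.integrable ν
    have hwi : Integrable (wfun (n := n)) ν := wfun_integrable hi
    constructor
    · exact integral_mono hgBi hgi fun x => min_le_left _ _
    · rw [← integral_sub hgi hgBi, ← integral_sub hwi htBi, ← integral_const_mul]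
      refine integral_mono_ae (hgi.sub hgBi) ((hwi.sub htBi).const_mul c) ?_
      filter_upwards [ae_octant ho] with x hx
      have h0 : 0 ≤ wfun x := wfun_nonneg hx
      have htr : truncF (R:ℝ) x ≤ wfun x := truncF_le_wfun hx
      have hgw : g x ≤ c * wfun x := by
        refine max_le ?_ (by positivity)
        calc ⟪u, x⟫ ≤ |⟪u, x⟫| := le_abs_self _
          _ ≤ ‖u‖ * ‖x‖ := abs_real_inner_le_norm _ _
          _ ≤ c * wfun x := mul_le_mul_of_nonneg_left (norm_le_wfun hx) hc0
      rw [gB_apply, tB_apply]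
      rcases le_total (g x) (c * truncF (R:ℝ) x) with h | h
      · rw [min_eq_left h]
        simp only [sub_self]
        have : 0 ≤ wfun x - truncF (R:ℝ) x := by linarith
        positivity
      · rw [min_eq_right h]
        nlinarith
  -- eventual statements
  have hWk := wfun_integral_tendsto μk μ hint hμ hmean
  have hTk := hweak tB
  have hgBk := hweak gB
  have hWT : ∫ x, wfun x ∂μ - ∫ x, tB x ∂μ < δ := by
    have heq : ∫ x, tB x ∂μ = ∫ x, truncF (R:ℝ) x ∂μ := rfl
    rw [heq]
    have := abs_sub_lt_iff.1 hRe
    linarith [this.2]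
  have eA : ∀ᶠ k in atTop, |(∫ x, gB x ∂(μk k)) - ∫ x, gB x ∂μ| < δ := by
    have := Metric.tendsto_nhds.1 hgBk δ hδ
    simpa [Real.dist_eq] using this
  have eB : ∀ᶠ k in atTop, (∫ x, wfun x ∂(μk k)) - ∫ x, tB x ∂(μk k) < 2 * δ := by
    have h3 : Tendsto (fun k => (∫ x, wfun x ∂(μk k)) - ∫ x, tB x ∂(μk k)) atTop
        (𝓝 ((∫ x, wfun x ∂μ) - ∫ x, tB x ∂μ)) := hWk.sub hTk
    exact h3.eventually_lt_const (by linarith)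
  filter_upwards [eA, eB] with k h1 h2
  rw [Real.dist_eq]
  obtain ⟨k1, k2⟩ := key (μk k) inferInstance (hint k) (hsupp k)
  obtain ⟨m1, m2⟩ := key μ inferInstance hμ hsuppμ
  have hA : (∫ x, g x ∂(μk k)) - ∫ x, gB x ∂(μk k) ≤ c * (2 * δ) :=
    k2.trans (mul_le_mul_of_nonneg_left h2.le hc0)
  have hBound : (∫ x, g x ∂μ) - ∫ x, gB x ∂μ ≤ c * δ :=
    m2.trans (mul_le_mul_of_nonneg_left hWT.le hc0)
  have habs := abs_sub_lt_iff.1 h1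
  have hzSk : zS (μk k) u = ∫ x, g x ∂(μk k) := rfl
  have hzSμ : zS μ u = ∫ x, g x ∂μ := rfl
  rw [hzSk, hzSμ, abs_sub_lt_iff]
  have e1 : c * (2 * δ) = 2 * (c * δ) := by ring
  constructor <;> nlinarith [k1, m1, habs.1, habs.2]

end Conv

section Unif

variable {n : ℕ}
local notation "E" => EuclideanSpace ℝ (Fin n)

lemma zS_unif (μk : ℕ → Measure E) (μ : Measure E)
    [∀ k, IsProbabilityMeasure (μk k)] [IsProbabilityMeasure μ]
    (hint : ∀ k, Integrable (fun x => x) (μk k)) (hμ : Integrable (fun x => x) μ)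
    (hsupp : ∀ k, μk k (octant n)ᶜ = 0) (hsuppμ : μ (octant n)ᶜ = 0)
    (hweak : ∀ f : BoundedContinuousFunction (EuclideanSpace ℝ (Fin n)) ℝ,
      Tendsto (fun k => ∫ x, f x ∂(μk k)) atTop (𝓝 (∫ x, f x ∂μ)))
    (hmean : Tendsto (fun k => ∫ x, x ∂(μk k)) atTop (𝓝 (∫ x, x ∂μ)))
    {ε : ℝ} (hε : 0 < ε) :
    ∀ᶠ k in atTop, ∀ u : E, |zS (μk k) u - zS μ u| ≤ ε * ‖u‖ := by
  classical
  set W := ∫ x, wfun x ∂μ with hW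
  have hNk_le : ∀ k, ∫ x, ‖x‖ ∂(μk k) ≤ ∫ x, wfun x ∂(μk k) := fun k =>
    integral_mono_ae (hint k).norm (wfun_integrable (hint k))
      ((ae_octant (hsupp k)).mono fun x hx => norm_le_wfun hx)
  have hNμ : ∫ x, ‖x‖ ∂μ ≤ W :=
    integral_mono_ae hμ.norm (wfun_integrable hμ)
      ((ae_octant hsuppμ).mono fun x hx => norm_le_wfun hx)
  set C := |W| + 1 with hC
  have hC0 : 0 < C := by positivity
  have hWC : W < C := (le_abs_self W).trans_lt (by simp [hC])
  have hWk := wfun_integral_tendsto μk μ hint hμ hmean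
  have hCk : ∀ᶠ k in atTop, ∫ x, ‖x‖ ∂(μk k) ≤ C := by
    filter_upwards [hWk.eventually_lt_const hWC] with k hk
    exact (hNk_le k).trans hk.le
  have hNμC : ∫ x, ‖x‖ ∂μ ≤ C := hNμ.trans hWC.le
  set η := ε / (3 * C) with hη
  have hη0 : 0 < η := by positivity
  set δ' := ε / 3 with hδ'
  have hδ'0 : 0 < δ' := by positivity
  have hηC : η * C = ε / 3 := by
    rw [hη]; field_simp
  -- finite net on the unit sphere
  have hcov : Metric.sphere (0:E) 1 ⊆ ⋃ v ∈ Metric.sphere (0:E) 1, Metric.ball v η :=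
    fun v hv => Set.mem_biUnion hv (Metric.mem_ball_self hη0)
  obtain ⟨t, hts, htf, htc⟩ := (isCompact_sphere (0:E) 1).elim_finite_subcover_image
    (fun v _ => Metric.isOpen_ball) hcov
  have hev : ∀ᶠ k in atTop, ∀ v ∈ t, |zS (μk k) v - zS μ v| < δ' := by
    rw [eventually_all_finite htf]
    intro v _
    have := Metric.tendsto_nhds.1
      (zS_tendsto μk μ hint hμ hsupp hsuppμ hweak hmean v) δ' hδ'0
    simpa [Real.dist_eq] using this
  filter_upwards [hev, hCk] with k h1 h2
  intro u
  rcases eq_or_ne u 0 with rfl | hu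
  · simp [zS_zero]
  · have hun : ‖u‖ ≠ 0 := norm_ne_zero_iff.2 hu
    set uh : E := ‖u‖⁻¹ • u with huhdef
    have huh : uh ∈ Metric.sphere (0:E) 1 := by
      rw [mem_sphere_zero_iff_norm, huhdef, norm_smul, Real.norm_eq_abs,
        abs_of_nonneg (by positivity)]
      field_simp
    obtain ⟨v, hvt, hvb⟩ := Set.mem_iUnion₂.1 (htc huh)
    have hdist : ‖uh - v‖ < η := by
      have := Metric.mem_ball.1 hvb
      rwa [dist_eq_norm] at this
    have lip1 : |zS (μk k) uh - zS (μk k) v| ≤ η * C := by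
      refine (zS_lipschitz (hint k) uh v).trans ?_
      exact mul_le_mul hdist.le h2 (integral_nonneg fun x => norm_nonneg x) hη0.le
    have lip2 : |zS μ uh - zS μ v| ≤ η * C := by
      refine (zS_lipschitz hμ uh v).trans ?_
      exact mul_le_mul hdist.le hNμC (integral_nonneg fun x => norm_nonneg x) hη0.le
    have hmid : |zS (μk k) v - zS μ v| < δ' := h1 v hvt
    have huhbound : |zS (μk k) uh - zS μ uh| ≤ ε := by
      have keyeq : zS (μk k) uh - zS μ uh = (zS (μk k) uh - zS (μk k) v) +
          (zS (μk k) v - zS μ v) + (zS μ v - zS μ uh) := by ring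
      calc |zS (μk k) uh - zS μ uh|
          ≤ |zS (μk k) uh - zS (μk k) v| + |zS (μk k) v - zS μ v| + |zS μ v - zS μ uh| := by
            rw [keyeq]; exact abs_add_three _ _ _
        _ ≤ η * C + δ' + η * C := by
            have l2' : |zS μ v - zS μ uh| ≤ η * C := by rw [abs_sub_comm]; exact lip2
            exact add_le_add (add_le_add lip1 hmid.le) l2'
        _ ≤ ε := by rw [hηC]; rw [hδ']; linarith
    -- scale back
    have husmul : ‖u‖ • uh = u := by
      rw [huhdef, smul_smul]
      rw [mul_inv_cancel₀ hun, one_smul]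
    calc |zS (μk k) u - zS μ u|
        = |zS (μk k) (‖u‖ • uh) - zS μ (‖u‖ • uh)| := by rw [husmul]
      _ = ‖u‖ * |zS (μk k) uh - zS μ uh| := by
          rw [zS_smul _ (norm_nonneg u), zS_smul _ (norm_nonneg u), ← mul_sub, abs_mul,
            abs_of_nonneg (norm_nonneg u)]
      _ ≤ ‖u‖ * ε := mul_le_mul_of_nonneg_left huhbound (norm_nonneg u)
      _ = ε * ‖u‖ := mul_comm _ _

end Unif

theorem zonoid_mean_continuity {n : ℕ} (μk : ℕ → Measure (EuclideanSpace ℝ (Fin n)))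
    (μ : Measure (EuclideanSpace ℝ (Fin n)))
    [∀ k, IsProbabilityMeasure (μk k)] [IsProbabilityMeasure μ]
    (hint : ∀ k, Integrable (fun x => x) (μk k)) (hμ : Integrable (fun x => x) μ)
    (hsupp : ∀ k, μk k (octant n)ᶜ = 0) (hsuppμ : μ (octant n)ᶜ = 0)
    (hweak : ∀ f : BoundedContinuousFunction (EuclideanSpace ℝ (Fin n)) ℝ,
      Tendsto (fun k => ∫ x, f x ∂(μk k)) atTop (𝓝 (∫ x, f x ∂μ)))
    (hmean : Tendsto (fun k => ∫ x, x ∂(μk k)) atTop (𝓝 (∫ x, x ∂μ))) :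
    Tendsto (fun k => Metric.hausdorffDist (zonoid (μk k)) (zonoid μ)) atTop (𝓝 0) := by
  refine Metric.tendsto_nhds.2 fun ε hε => ?_
  have hε2 : 0 < ε / 2 := by positivity
  filter_upwards [zS_unif μk μ hint hμ hsupp hsuppμ hweak hmean hε2] with k hk
  rw [Real.dist_eq, sub_zero, abs_of_nonneg Metric.hausdorffDist_nonneg]
  have hmain : Metric.hausdorffDist (zonoid (μk k)) (zonoid μ) ≤ ε / 2 := by
    refine Metric.hausdorffDist_le_of_infDist hε2.le ?_ ?_
    · intro z hz
      have hKb : Bornology.IsBounded (zonoid μ) :=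
        isBounded_iff_forall_norm_le.2 ⟨∫ x, ‖x‖ ∂μ, fun x hx => zonoid_norm_le hμ hx⟩
      have hinf : Metric.infDist z (closure (zonoid μ)) ≤ ε / 2 := by
        refine sep_lemma hKb.isCompact_closure (zonoid_convex hμ).closure z hε2.le
          fun v => ?_
        obtain ⟨y, hy, hvy⟩ := exists_mem_zonoid_inner_eq hμ v
        refine ⟨y, subset_closure hy, ?_⟩
        have h1 : ⟪v, z⟫ ≤ zS (μk k) v := inner_le_zS (hint k) hz v
        have h2 := abs_le.1 (hk v)
        rw [hvy]
        linarith [h2.1, h2.2]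
      rwa [Metric.infDist_closure] at hinf
    · intro z hz
      have hKb : Bornology.IsBounded (zonoid (μk k)) :=
        isBounded_iff_forall_norm_le.2
          ⟨∫ x, ‖x‖ ∂(μk k), fun x hx => zonoid_norm_le (hint k) hx⟩
      have hinf : Metric.infDist z (closure (zonoid (μk k))) ≤ ε / 2 := by
        refine sep_lemma hKb.isCompact_closure (zonoid_convex (hint k)).closure z hε2.le
          fun v => ?_
        obtain ⟨y, hy, hvy⟩ := exists_mem_zonoid_inner_eq (hint k) v
        refine ⟨y, subset_closure hy, ?_⟩
        have h1 : ⟪v, z⟫ ≤ zS μ v := inner_le_zS hμ hz v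
        have h2 := abs_le.1 (hk v)
        rw [hvy]
        linarith [h2.1, h2.2]
      rwa [Metric.infDist_closure] at hinf
  linarith
end

section
/- Let (E,d) be a separable metric space and X₁, X₂, … independent E-valued random variables with common distribution μ. Then the empirical measures μ̂_N = (1/N) Σ_{i=1}^N δ_{X_i} converge weakly to μ as N → ∞ with probability 1. -/
open MeasureTheory Filter Topology ProbabilityTheory
open scoped ENNReal NNReal

lemma gc_slln {E : Type*} [MeasurableSpace E]
    {Ω : Type*} [MeasureSpace Ω] [IsProbabilityMeasure (ℙ : Measure Ω)]
    (X : ℕ → Ω → E) (hXm : ∀ i, Measurable (X i))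
    (hindep : iIndepFun X ℙ)
    (μ : Measure E) (hdist : ∀ i, Measure.map (X i) ℙ = μ)
    {U : Set E} (hU : MeasurableSet U) :
    ∀ᵐ ω ∂(ℙ : Measure Ω),
      Tendsto (fun N : ℕ => (N:ℝ)⁻¹ * ∑ i ∈ Finset.range N,
          U.indicator (fun _ => (1:ℝ)) (X i ω)) atTop (𝓝 (μ U).toReal) := by
  set g : E → ℝ := U.indicator (fun _ => 1) with hg
  have hgm : Measurable g := measurable_const.indicator hU
  set Y : ℕ → Ω → ℝ := fun i ω => g (X i ω) with hY
  have hident : ∀ i, IdentDistrib (Y i) (Y 0) ℙ ℙ := by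
    intro i
    have h0 : IdentDistrib (X i) (X 0) ℙ ℙ :=
      ⟨(hXm i).aemeasurable, (hXm 0).aemeasurable, by rw [hdist, hdist]⟩
    exact h0.comp hgm
  have hpind : Pairwise (Function.onFun (IndepFun · · ℙ) Y) := fun i j hij =>
    (hindep.indepFun hij).comp hgm hgm
  have hint : Integrable (Y 0) ℙ := by
    have : Y 0 = (X 0 ⁻¹' U).indicator (fun _ => (1:ℝ)) := by
      ext ω
      by_cases h : X 0 ω ∈ U <;> simp [hY, hg, Set.indicator_apply, h]
    rw [this, integrable_indicator_iff (hXm 0 hU)]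
    exact (integrable_const _).integrableOn
  have hmean : (∫ ω, Y 0 ω ∂(ℙ : Measure Ω)) = (μ U).toReal := by
    calc ∫ ω, Y 0 ω ∂(ℙ : Measure Ω) = ∫ x, g x ∂(Measure.map (X 0) ℙ) :=
          (integral_map (hXm 0).aemeasurable hgm.aestronglyMeasurable).symm
    _ = ∫ x, g x ∂μ := by rw [hdist]
    _ = (μ U).toReal := by rw [hg, integral_indicator_const _ hU]; simp [Measure.real]
  filter_upwards [strong_law_ae Y hint hpind hident] with ω hω
  rw [hmean] at hω
  simpa only [smul_eq_mul] using hω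

theorem glivenko_cantelli_varadarajan
    {E : Type*} [MetricSpace E] [TopologicalSpace.SeparableSpace E]
    [MeasurableSpace E] [BorelSpace E]
    {Ω : Type*} [MeasureSpace Ω] [IsProbabilityMeasure (ℙ : Measure Ω)]
    (X : ℕ → Ω → E) (hXm : ∀ i, Measurable (X i))
    (hindep : iIndepFun X ℙ)
    (μ : Measure E) [IsProbabilityMeasure μ]
    (hdist : ∀ i, Measure.map (X i) ℙ = μ) :
    ∀ᵐ ω ∂(ℙ : Measure Ω), ∀ f : BoundedContinuousFunction E ℝ,
      Tendsto (fun N : ℕ => (N : ℝ)⁻¹ * ∑ i ∈ Finset.range N, f (X i ω)) atTop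
        (𝓝 (∫ x, f x ∂μ)) := by
  have : SecondCountableTopology E := UniformSpace.secondCountable_of_separable E
  obtain ⟨S, hSc, -, hSb⟩ := TopologicalSpace.exists_countable_basis E
  set 𝒞 : Set (Set E) := (fun T => ⋃₀ T) '' {T | T.Finite ∧ T ⊆ S} with h𝒞
  have h𝒞c : 𝒞.Countable := (Set.countable_setOf_finite_subset hSc).image _
  have h𝒞open : ∀ U ∈ 𝒞, IsOpen U := by
    rintro _ ⟨T, ⟨hTf, hTS⟩, rfl⟩
    exact isOpen_sUnion fun s hs => hSb.isOpen (hTS hs)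
  have key : ∀ᵐ ω ∂(ℙ : Measure Ω), ∀ U ∈ 𝒞,
      Tendsto (fun N : ℕ => (N:ℝ)⁻¹ * ∑ i ∈ Finset.range N,
        U.indicator (fun _ => (1:ℝ)) (X i ω)) atTop (𝓝 (μ U).toReal) :=
    (ae_ball_iff h𝒞c).mpr fun U hU =>
      gc_slln X hXm hindep μ hdist ((h𝒞open U hU).measurableSet)
  filter_upwards [key] with ω hω
  set κ : ℕ → Measure E :=
    fun N => ((N:ℝ≥0∞)⁻¹) • ∑ i ∈ Finset.range N, Measure.dirac (X i ω) with hκdef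
  have hκprob : ∀ N : ℕ, 0 < N → IsProbabilityMeasure (κ N) := by
    intro N hN
    constructor
    simp only [hκdef, Measure.smul_apply, smul_eq_mul, Measure.coe_finset_sum,
      Finset.sum_apply, measure_univ, Finset.sum_const, Finset.card_range, nsmul_eq_mul, mul_one]
    exact ENNReal.inv_mul_cancel (by exact_mod_cast hN.ne') (ENNReal.natCast_ne_top N)
  have hκapply : ∀ (N : ℕ) (U : Set E), MeasurableSet U →
      (κ N U).toReal = (N:ℝ)⁻¹ * ∑ i ∈ Finset.range N, U.indicator (fun _ => (1:ℝ)) (X i ω) := by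
    intro N U hU
    simp only [hκdef, Measure.smul_apply, smul_eq_mul, Measure.coe_finset_sum, Finset.sum_apply]
    rw [ENNReal.toReal_mul, ENNReal.toReal_inv, ENNReal.toReal_natCast,
      ENNReal.toReal_sum (fun i _ => (measure_lt_top _ _).ne)]
    congr 1
    refine Finset.sum_congr rfl fun i _ => ?_
    rw [Measure.dirac_apply' _ hU]
    by_cases h : X i ω ∈ U <;> simp [h]
  have hμprob : IsProbabilityMeasure μ := ‹_›
  let μP : ProbabilityMeasure E := ⟨μ, hμprob⟩
  set P : ℕ → ProbabilityMeasure E := fun N =>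
    if h : 0 < N then ⟨κ N, hκprob N h⟩ else ⟨μ, hμprob⟩ with hPdef
  have hPcoe : ∀ N, 0 < N → (P N : Measure E) = κ N := by
    intro N h; simp [hPdef, h]
  have hcoeR : ∀ (ν : ProbabilityMeasure E) (s : Set E),
      ((ν s : ℝ≥0) : ℝ) = ((ν : Measure E) s).toReal := by
    intro ν s
    rw [← ENNReal.coe_toReal, ProbabilityMeasure.ennreal_coeFn_eq_coeFn_toMeasure]
  have hPtend : Tendsto P atTop (𝓝 μP) := by
    apply tendsto_of_forall_isOpen_le_liminf
    intro G hG
    have hUle : ∀ U ∈ 𝒞, U ⊆ G →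
        (μP U
          ≤ atTop.liminf fun N => P N G) := by
      intro U hU hUG
      have hmeas : MeasurableSet U := (h𝒞open U hU).measurableSet
      have ht : Tendsto (fun N => P N U) atTop
          (𝓝 (μP U)) := by
        rw [← NNReal.tendsto_coe]
        have h1 : (fun N => ((P N U : ℝ≥0) : ℝ)) =ᶠ[atTop]
            (fun N : ℕ => (N:ℝ)⁻¹ * ∑ i ∈ Finset.range N,
              U.indicator (fun _ => (1:ℝ)) (X i ω)) := by
          filter_upwards [eventually_gt_atTop 0] with N hN
          rw [hcoeR, hPcoe N hN, hκapply N U hmeas]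
        have h2 : ((μP U : ℝ≥0) : ℝ)
            = (μ U).toReal := hcoeR _ _
        rw [h2]
        exact (hω U hU).congr' h1.symm
      have hle : atTop.liminf (fun N => P N U) ≤ atTop.liminf fun N => P N G := by
        refine liminf_le_liminf (Eventually.of_forall fun N =>
          ProbabilityMeasure.apply_mono _ hUG) ?_ ?_
        · exact ⟨0, eventually_map.mpr (Eventually.of_forall fun N => zero_le)⟩
        · exact IsBoundedUnder.isCoboundedUnder_ge
            ⟨1, eventually_map.mpr (Eventually.of_forall fun N =>
              ProbabilityMeasure.apply_le_one _ _)⟩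
      rw [← ht.liminf_eq]
      exact hle
    by_cases hGne : {s | s ∈ S ∧ s ⊆ G}.Nonempty
    · obtain ⟨e, he⟩ := Set.Countable.exists_eq_range
        (hSc.mono (fun s hs => hs.1)) hGne
      have heS : ∀ i, e i ∈ S := fun i => by
        have : e i ∈ {s | s ∈ S ∧ s ⊆ G} := he ▸ Set.mem_range_self i
        exact this.1
      have heG : ∀ i, e i ⊆ G := fun i => by
        have : e i ∈ {s | s ∈ S ∧ s ⊆ G} := he ▸ Set.mem_range_self i
        exact this.2
      set V : ℕ → Set E := Set.accumulate e with hV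
      have hVmem : ∀ n, V n ∈ 𝒞 := by
        intro n
        refine ⟨e '' Set.Iic n, ⟨(Set.finite_Iic n).image e, ?_⟩, ?_⟩
        · rintro _ ⟨i, -, rfl⟩; exact heS i
        · show ⋃₀ (e '' Set.Iic n) = V n
          rw [Set.sUnion_image, hV]
          ext x
          simp [Set.accumulate_def]
      have hVG : ∀ n, V n ⊆ G := fun n =>
        Set.iUnion₂_subset fun i _ => heG i
      have hVunion : ⋃ n, V n = G := by
        rw [Set.iUnion_accumulate]
        rw [hSb.open_eq_sUnion' hG, he, Set.sUnion_range]
      have htend : Tendsto (fun n => μ (V n)) atTop (𝓝 (μ G)) := by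
        have := tendsto_measure_iUnion_atTop (μ := μ) (s := V) Set.monotone_accumulate
        rwa [hVunion] at this
      have htend' : Tendsto
          (fun n => μP (V n)) atTop
          (𝓝 (μP G)) := by
        have hcont := ENNReal.tendsto_toNNReal (a := μ G) (measure_ne_top μ G)
        exact hcont.comp htend
      exact le_of_tendsto htend'
        (Eventually.of_forall fun n => hUle (V n) (hVmem n) (hVG n))
    · have hGempty : G = ∅ := by
        rw [hSb.open_eq_sUnion' hG]
        rw [Set.not_nonempty_iff_eq_empty] at hGne
        rw [hGne, Set.sUnion_empty]
      have h0 : μP G = 0 := by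
        have h1 := hcoeR μP G
        rw [hGempty] at h1
        simp only [measure_empty, ENNReal.toReal_zero] at h1
        have : ((μP G : ℝ≥0) : ℝ) = 0 := by rw [hGempty]; exact h1
        exact_mod_cast this
      rw [h0]
      exact zero_le
  intro f
  have := ProbabilityMeasure.tendsto_iff_forall_integral_tendsto.mp hPtend f
  refine this.congr' ?_
  filter_upwards [eventually_gt_atTop 0] with N hN
  rw [hPcoe N hN, hκdef]
  rw [integral_smul_measure,
    integral_finset_sum_measure (fun i _ => f.integrable _)]
  simp [integral_dirac, smul_eq_mul, ENNReal.toReal_inv]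
end

section
/- Let X₁, X₂, … be independent ℝⁿ₊-valued random variables with common distribution μ having finite first moment, and let μ̂_N = (1/N) Σ_{i=1}^N δ_{X_i} be the empirical measures. Then the empirical zonoids Z(μ̂_N) converge to Z(μ) in the Hausdorff metric with probability 1. -/
open MeasureTheory Pointwise Filter Topology ProbabilityTheory

open scoped RealInnerProductSpace

/-- The empirical measure of the first `N` samples. -/
noncomputable def empiricalMeasure {n : ℕ} (x : ℕ → EuclideanSpace ℝ (Fin n)) (N : ℕ) :
    Measure (EuclideanSpace ℝ (Fin n)) :=
  ((N : ENNReal))⁻¹ • ∑ i ∈ Finset.range N, Measure.dirac (x i)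

namespace EmpZonoid

variable {n : ℕ}

/-- Support function of the zonoid. -/
noncomputable def hfun (ν : Measure (EuclideanSpace ℝ (Fin n)))
    (u : EuclideanSpace ℝ (Fin n)) : ℝ :=
  ∫ x, max ⟪u, x⟫ 0 ∂ν

lemma contf (u : EuclideanSpace ℝ (Fin n)) :
    Continuous fun x : EuclideanSpace ℝ (Fin n) => max ⟪u, x⟫ 0 :=
  (continuous_const.inner continuous_id).max continuous_const

lemma abs_maxzero (a : ℝ) : |max a 0| ≤ |a| := by
  have := abs_max_sub_max_le_abs a 0 0
  simpa using this

lemma integrable_posInner {ν : Measure (EuclideanSpace ℝ (Fin n))}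
    (hν : Integrable (fun x => x) ν) (u : EuclideanSpace ℝ (Fin n)) :
    Integrable (fun x => max ⟪u, x⟫ 0) ν := by
  refine (hν.norm.const_mul ‖u‖).mono' (contf u).aestronglyMeasurable ?_
  refine ae_of_all _ fun x => ?_
  calc ‖max ⟪u, x⟫ 0‖ ≤ |⟪u, x⟫| := abs_maxzero _
    _ ≤ ‖u‖ * ‖x‖ := abs_real_inner_le_norm u x

lemma integrable_phi {ν : Measure (EuclideanSpace ℝ (Fin n))}
    (hν : Integrable (fun x => x) ν) {φ : EuclideanSpace ℝ (Fin n) → ℝ}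
    (hφm : Measurable φ) (hφ01 : ∀ x, φ x ∈ Set.Icc (0:ℝ) 1) :
    Integrable (fun x => φ x • x) ν := by
  refine hν.norm.mono' (hφm.smul measurable_id).aestronglyMeasurable ?_
  refine ae_of_all _ fun x => ?_
  rw [norm_smul]
  have h1 : ‖φ x‖ ≤ 1 := by
    rw [Real.norm_eq_abs, abs_of_nonneg (hφ01 x).1]; exact (hφ01 x).2
  calc ‖φ x‖ * ‖x‖ ≤ 1 * ‖x‖ := by gcongr
    _ = ‖x‖ := one_mul _

lemma inner_le_hfun {ν : Measure (EuclideanSpace ℝ (Fin n))}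
    (hν : Integrable (fun x => x) ν) {z : EuclideanSpace ℝ (Fin n)}
    (hz : z ∈ zonoid ν) (u : EuclideanSpace ℝ (Fin n)) : ⟪u, z⟫ ≤ hfun ν u := by
  obtain ⟨φ, hφm, hφ01, rfl⟩ := hz
  rw [← integral_inner (integrable_phi hν hφm hφ01) u]
  have hint' : Integrable (fun x => ⟪u, φ x • x⟫) ν := by
    refine (hν.norm.const_mul ‖u‖).mono'
      (((continuous_const.inner continuous_id).measurable).comp
        (hφm.smul measurable_id)).aestronglyMeasurable (ae_of_all _ fun x => ?_)
    calc ‖⟪u, φ x • x⟫‖ ≤ ‖u‖ * ‖φ x • x‖ := abs_real_inner_le_norm _ _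
      _ ≤ ‖u‖ * (1 * ‖x‖) := by
          rw [norm_smul]
          gcongr
          rw [Real.norm_eq_abs, abs_of_nonneg (hφ01 x).1]; exact (hφ01 x).2
      _ = ‖u‖ * ‖x‖ := by ring
  refine integral_mono hint' (integrable_posInner hν u) fun x => ?_
  rw [real_inner_smul_right]
  rcases le_total ⟪u, x⟫ 0 with h | h
  · have : φ x * ⟪u, x⟫ ≤ 0 := mul_nonpos_iff.2 (Or.inl ⟨(hφ01 x).1, h⟩)
    exact this.trans (le_max_right _ _)
  · have h2 : φ x * ⟪u, x⟫ ≤ ⟪u, x⟫ := mul_le_of_le_one_left h (hφ01 x).2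
    exact h2.trans (le_max_left _ _)

lemma exists_inner_eq_hfun {ν : Measure (EuclideanSpace ℝ (Fin n))}
    (hν : Integrable (fun x => x) ν) (u : EuclideanSpace ℝ (Fin n)) :
    ∃ z ∈ zonoid ν, ⟪u, z⟫ = hfun ν u := by
  set S : Set (EuclideanSpace ℝ (Fin n)) := {x | 0 < ⟪u, x⟫} with hS
  have hSm : MeasurableSet S :=
    (isOpen_lt continuous_const (continuous_const.inner continuous_id)).measurableSet
  set φ : EuclideanSpace ℝ (Fin n) → ℝ := S.indicator fun _ => 1 with hφ
  have hφm : Measurable φ := measurable_const.indicator hSm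
  have hφ01 : ∀ x, φ x ∈ Set.Icc (0:ℝ) 1 := fun x => by
    rw [hφ]; by_cases h : x ∈ S <;> simp [Set.indicator_apply, h]
  refine ⟨∫ x, φ x • x ∂ν, ⟨φ, hφm, hφ01, rfl⟩, ?_⟩
  rw [← integral_inner (integrable_phi hν hφm hφ01) u]
  unfold hfun
  congr 1
  ext x
  rw [real_inner_smul_right, hφ]
  by_cases h : x ∈ S
  · have h' : (0:ℝ) < ⟪u, x⟫ := h
    rw [Set.indicator_of_mem h, one_mul]
    exact (max_eq_left h'.le).symm
  · have h' : ⟪u, x⟫ ≤ 0 := not_lt.1 h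
    rw [Set.indicator_of_notMem h, zero_mul, max_eq_right h']

lemma zonoid_nonempty (ν : Measure (EuclideanSpace ℝ (Fin n))) : (zonoid ν).Nonempty := by
  refine ⟨0, (fun _ => 0), measurable_const, fun x => ⟨le_refl _, zero_le_one⟩, ?_⟩
  simp

lemma zonoid_convex {ν : Measure (EuclideanSpace ℝ (Fin n))}
    (hν : Integrable (fun x => x) ν) : Convex ℝ (zonoid ν) := by
  rintro z1 ⟨φ1, h1m, h101, rfl⟩ z2 ⟨φ2, h2m, h201, rfl⟩ a b ha hb hab
  refine ⟨fun x => a * φ1 x + b * φ2 x, (h1m.const_mul a).add (h2m.const_mul b),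
    fun x => ?_, ?_⟩
  · simp only [Set.mem_Icc]
    constructor
    · exact add_nonneg (mul_nonneg ha (h101 x).1) (mul_nonneg hb (h201 x).1)
    · have i1 := mul_le_mul_of_nonneg_left (h101 x).2 ha
      have i2 := mul_le_mul_of_nonneg_left (h201 x).2 hb
      linarith
  · have e : ∀ x : EuclideanSpace ℝ (Fin n),
        (a * φ1 x + b * φ2 x) • x = a • (φ1 x • x) + b • (φ2 x • x) := by
      intro x; rw [add_smul, smul_smul, smul_smul]
    have int1 : Integrable (fun x => a • (φ1 x • x)) ν := (integrable_phi hν h1m h101).smul a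
    have int2 : Integrable (fun x => b • (φ2 x • x)) ν := (integrable_phi hν h2m h201).smul b
    have key : (∫ x, (a * φ1 x + b * φ2 x) • x ∂ν)
        = a • (∫ x, φ1 x • x ∂ν) + b • ∫ x, φ2 x • x ∂ν := by
      rw [integral_congr_ae (ae_of_all _ e), integral_add int1 int2, integral_smul, integral_smul]
    exact key.symm

lemma infDist_le {ν₁ ν₂ : Measure (EuclideanSpace ℝ (Fin n))}
    (h1 : Integrable (fun x => x) ν₁) (h2 : Integrable (fun x => x) ν₂)
    {ε : ℝ} (hε : 0 ≤ ε) (H : ∀ u, hfun ν₁ u ≤ hfun ν₂ u + ε * ‖u‖)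
    {z : EuclideanSpace ℝ (Fin n)} (hz : z ∈ zonoid ν₁) :
    Metric.infDist z (zonoid ν₂) ≤ ε := by
  set K := closure (zonoid ν₂) with hK
  have hKne : K.Nonempty := (zonoid_nonempty ν₂).closure
  have hKc : Convex ℝ K := (zonoid_convex h2).closure
  have hKcomplete : IsComplete K := isClosed_closure.isComplete
  obtain ⟨v, hvK, hv⟩ := exists_norm_eq_iInf_of_complete_convex hKne hKcomplete hKc z
  have hproj := (norm_eq_iInf_iff_real_inner_le_zero hKc hvK).1 hv
  set u := z - v with hu
  have hBv : hfun ν₂ u ≤ ⟪u, v⟫ := by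
    obtain ⟨w, hw, hwv⟩ := exists_inner_eq_hfun h2 u
    have h3 : ⟪u, w - v⟫ ≤ 0 := hproj w (subset_closure hw)
    have h4 : ⟪u, w - v⟫ = ⟪u, w⟫ - ⟪u, v⟫ := inner_sub_right u w v
    rw [← hwv]
    linarith
  have hz1 : ⟪u, z⟫ ≤ hfun ν₂ u + ε * ‖u‖ := (inner_le_hfun h1 hz u).trans (H u)
  have hsq : ‖u‖ ^ 2 ≤ ε * ‖u‖ := by
    have h5 : ⟪u, z⟫ - ⟪u, v⟫ = ‖u‖ ^ 2 := by
      rw [← inner_sub_right, ← hu, real_inner_self_eq_norm_sq]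
    linarith
  have hun : ‖u‖ ≤ ε := by
    rcases eq_or_lt_of_le (norm_nonneg u) with h0 | h0
    · rw [← h0]; exact hε
    · nlinarith
  have h6 : Metric.infDist z (zonoid ν₂) = Metric.infDist z K := Metric.infDist_closure.symm
  rw [h6]
  calc Metric.infDist z K ≤ dist z v := Metric.infDist_le_dist_of_mem hvK
    _ = ‖z - v‖ := dist_eq_norm z v
    _ ≤ ε := hun

lemma hausdorffDist_le {ν₁ ν₂ : Measure (EuclideanSpace ℝ (Fin n))}
    (h1 : Integrable (fun x => x) ν₁) (h2 : Integrable (fun x => x) ν₂)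
    {ε : ℝ} (hε : 0 ≤ ε) (H12 : ∀ u, hfun ν₁ u ≤ hfun ν₂ u + ε * ‖u‖)
    (H21 : ∀ u, hfun ν₂ u ≤ hfun ν₁ u + ε * ‖u‖) :
    Metric.hausdorffDist (zonoid ν₁) (zonoid ν₂) ≤ ε :=
  Metric.hausdorffDist_le_of_infDist hε (fun _ hz => infDist_le h1 h2 hε H12 hz)
    (fun _ hz => infDist_le h2 h1 hε H21 hz)

lemma integrable_dirac {F : Type*} [NormedAddCommGroup F] [MeasurableSpace F] [BorelSpace F] [CompleteSpace F]
    {g : EuclideanSpace ℝ (Fin n) → F} (hg : Continuous g) (a : EuclideanSpace ℝ (Fin n)) :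
    Integrable g (Measure.dirac a) := by
  refine ⟨hg.aestronglyMeasurable, ?_⟩
  rw [HasFiniteIntegral, lintegral_dirac' _ hg.measurable.enorm]
  exact enorm_lt_top

lemma integral_empirical {F : Type*} [NormedAddCommGroup F] [NormedSpace ℝ F]
    [MeasurableSpace F] [BorelSpace F] [CompleteSpace F]
    {g : EuclideanSpace ℝ (Fin n) → F} (hg : Continuous g)
    (x : ℕ → EuclideanSpace ℝ (Fin n)) (N : ℕ) :
    ∫ y, g y ∂(empiricalMeasure x N) = (N:ℝ)⁻¹ • ∑ i ∈ Finset.range N, g (x i) := by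
  rw [empiricalMeasure, integral_smul_measure,
    integral_finset_sum_measure (fun i _ => integrable_dirac hg (x i))]
  congr 1
  · rw [ENNReal.toReal_inv, ENNReal.toReal_natCast]
  · exact Finset.sum_congr rfl fun i _ => integral_dirac' g (x i) hg.stronglyMeasurable

lemma integrable_id_empirical (x : ℕ → EuclideanSpace ℝ (Fin n)) (N : ℕ) :
    Integrable (fun y => y) (empiricalMeasure x N) := by
  rcases Nat.eq_zero_or_pos N with rfl | hN
  · have h0 : empiricalMeasure x 0 = 0 := by simp [empiricalMeasure]
    rw [h0]; exact integrable_zero_measure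
  · rw [empiricalMeasure]
    refine (integrable_smul_measure ?_ ?_).2
      (integrable_finset_sum_measure.2 fun i _ => integrable_dirac continuous_id (x i))
    · simp
    · simp [hN.ne']

lemma hfun_empirical (x : ℕ → EuclideanSpace ℝ (Fin n)) (N : ℕ)
    (u : EuclideanSpace ℝ (Fin n)) :
    hfun (empiricalMeasure x N) u = (N:ℝ)⁻¹ * ∑ i ∈ Finset.range N, max ⟪u, x i⟫ 0 := by
  rw [hfun, integral_empirical (contf u) x N, smul_eq_mul]

lemma norm_empirical (x : ℕ → EuclideanSpace ℝ (Fin n)) (N : ℕ) :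
    (∫ y, ‖y‖ ∂(empiricalMeasure x N)) = (N:ℝ)⁻¹ * ∑ i ∈ Finset.range N, ‖x i‖ := by
  rw [integral_empirical continuous_norm x N, smul_eq_mul]

lemma hfun_zero_left (ν : Measure (EuclideanSpace ℝ (Fin n))) : hfun ν 0 = 0 := by
  simp [hfun]

lemma hfun_smul (ν : Measure (EuclideanSpace ℝ (Fin n))) {c : ℝ} (hc : 0 ≤ c)
    (u : EuclideanSpace ℝ (Fin n)) : hfun ν (c • u) = c * hfun ν u := by
  rw [hfun, hfun, ← integral_const_mul]
  congr 1
  ext x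
  rw [real_inner_smul_left, mul_max_of_nonneg _ _ hc, mul_zero]

lemma hfun_lipschitz {ν : Measure (EuclideanSpace ℝ (Fin n))}
    (hν : Integrable (fun x => x) ν) (u v : EuclideanSpace ℝ (Fin n)) :
    |hfun ν u - hfun ν v| ≤ (∫ x, ‖x‖ ∂ν) * ‖u - v‖ := by
  have i1 := integrable_posInner hν u
  have i2 := integrable_posInner hν v
  rw [hfun, hfun, ← integral_sub i1 i2]
  have h1 : |∫ x, (max ⟪u, x⟫ 0 - max ⟪v, x⟫ 0) ∂ν|
      ≤ ∫ x, |max ⟪u, x⟫ 0 - max ⟪v, x⟫ 0| ∂ν := by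
    simpa [Real.norm_eq_abs] using
      norm_integral_le_integral_norm (fun x => max ⟪u, x⟫ 0 - max ⟪v, x⟫ 0) (μ := ν)
  refine h1.trans ?_
  have hb : ∀ x, |max ⟪u, x⟫ 0 - max ⟪v, x⟫ 0| ≤ ‖u - v‖ * ‖x‖ := fun x => by
    refine (abs_max_sub_max_le_abs _ _ _).trans ?_
    rw [← inner_sub_left]
    exact abs_real_inner_le_norm _ _
  calc (∫ x, |max ⟪u, x⟫ 0 - max ⟪v, x⟫ 0| ∂ν) ≤ ∫ x, ‖u - v‖ * ‖x‖ ∂ν :=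
      integral_mono (i1.sub i2).abs (hν.norm.const_mul _) hb
    _ = ‖u - v‖ * ∫ x, ‖x‖ ∂ν := integral_const_mul _ _
    _ = (∫ x, ‖x‖ ∂ν) * ‖u - v‖ := mul_comm _ _

lemma hfun_le_of_ball {ν₁ ν₂ : Measure (EuclideanSpace ℝ (Fin n))} {ε : ℝ}
    (hball : ∀ u, ‖u‖ ≤ 1 → |hfun ν₁ u - hfun ν₂ u| ≤ ε) :
    ∀ u, hfun ν₁ u ≤ hfun ν₂ u + ε * ‖u‖ := by
  intro u
  rcases eq_or_ne u 0 with rfl | hne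
  · simp [hfun_zero_left]
  · set w : EuclideanSpace ℝ (Fin n) := ‖u‖⁻¹ • u with hw
    have hwn : ‖w‖ = 1 := norm_smul_inv_norm hne
    have huw : ‖u‖ • w = u := smul_inv_smul₀ (norm_ne_zero_iff.2 hne) u
    have e1 : hfun ν₁ u = ‖u‖ * hfun ν₁ w := by
      conv_lhs => rw [← huw]
      rw [hfun_smul _ (norm_nonneg u)]
    have e2 : hfun ν₂ u = ‖u‖ * hfun ν₂ w := by
      conv_lhs => rw [← huw]
      rw [hfun_smul _ (norm_nonneg u)]
    have hb := (abs_sub_le_iff.1 (hball w hwn.le)).1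
    have := mul_le_mul_of_nonneg_left (by linarith : hfun ν₁ w ≤ hfun ν₂ w + ε) (norm_nonneg u)
    rw [e1, e2]
    nlinarith [norm_nonneg u]

lemma det_tendsto (x : ℕ → EuclideanSpace ℝ (Fin n)) (μ : Measure (EuclideanSpace ℝ (Fin n)))
    (hμint : Integrable (fun y => y) μ) {D : Set (EuclideanSpace ℝ (Fin n))} (hD : Dense D)
    (hu : ∀ d ∈ D, Tendsto (fun N => hfun (empiricalMeasure x N) d) atTop (𝓝 (hfun μ d)))
    (hnorm : Tendsto (fun N => ∫ y, ‖y‖ ∂(empiricalMeasure x N)) atTop (𝓝 (∫ y, ‖y‖ ∂μ))) :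
    Tendsto (fun N => Metric.hausdorffDist (zonoid (empiricalMeasure x N)) (zonoid μ))
      atTop (𝓝 0) := by
  set C : ℝ := ∫ y, ‖y‖ ∂μ with hC
  have hC0 : 0 ≤ C := integral_nonneg fun y => norm_nonneg y
  have claim : ∀ ε > (0:ℝ), ∀ᶠ N in atTop,
      Metric.hausdorffDist (zonoid (empiricalMeasure x N)) (zonoid μ) ≤ ε := by
    intro ε hε
    set δ : ℝ := ε / (3 * (2 * C + 2)) with hδdef
    have hδ : 0 < δ := by positivity
    -- cover the closed unit ball by finitely many δ-balls centered in D
    have hcov : Metric.closedBall (0 : EuclideanSpace ℝ (Fin n)) 1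
        ⊆ ⋃ d ∈ D, Metric.ball d δ := by
      intro u _
      obtain ⟨d, hdD, hdd⟩ := Metric.mem_closure_iff.1 (hD u) δ hδ
      exact Set.mem_biUnion hdD (by simpa [Metric.mem_ball, dist_comm] using hdd)
    obtain ⟨t, htD, htfin, htcov⟩ :=
      (isCompact_closedBall (0 : EuclideanSpace ℝ (Fin n)) 1).elim_finite_subcover_image
        (fun d _ => Metric.isOpen_ball) hcov
    -- eventually, the support functions are close at the finitely many centers
    have h1 : ∀ᶠ N in atTop, ∀ d ∈ htfin.toFinset,
        |hfun (empiricalMeasure x N) d - hfun μ d| ≤ ε / 3 := by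
      rw [eventually_all_finset]
      intro d hd
      have hdD : d ∈ D := htD (htfin.mem_toFinset.1 hd)
      have hev : ∀ᶠ y in 𝓝 (hfun μ d), |y - hfun μ d| ≤ ε / 3 := by
        have hball := Metric.closedBall_mem_nhds (hfun μ d) (by positivity : (0:ℝ) < ε / 3)
        filter_upwards [hball] with y hy
        simpa [Real.dist_eq] using hy
      exact (hu d hdD).eventually hev
    have h2 : ∀ᶠ N in atTop, (∫ y, ‖y‖ ∂(empiricalMeasure x N)) ≤ C + 1 :=
      hnorm.eventually (eventually_le_nhds (lt_add_one C))
    filter_upwards [h1, h2] with N hN1 hN2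
    -- uniform bound on the unit ball
    have hball : ∀ u, ‖u‖ ≤ 1 → |hfun (empiricalMeasure x N) u - hfun μ u| ≤ ε := by
      intro u hu1
      have humem : u ∈ Metric.closedBall (0 : EuclideanSpace ℝ (Fin n)) 1 := by
        simpa [Metric.mem_closedBall, dist_zero_right] using hu1
      obtain ⟨d, hdt, hud⟩ := Set.mem_iUnion₂.1 (htcov humem)
      have hdt' : d ∈ htfin.toFinset := htfin.mem_toFinset.2 hdt
      have hud' : ‖u - d‖ < δ := by
        rw [← dist_eq_norm]; exact hud
      have hCN0 : 0 ≤ ∫ y, ‖y‖ ∂(empiricalMeasure x N) :=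
        integral_nonneg fun y => norm_nonneg y
      have hl1 := hfun_lipschitz (integrable_id_empirical x N) u d
      have hl2 := hfun_lipschitz hμint d u
      have hd3 := hN1 d hdt'
      have hdu : ‖d - u‖ = ‖u - d‖ := norm_sub_rev d u
      have tri : |hfun (empiricalMeasure x N) u - hfun μ u|
          ≤ |hfun (empiricalMeasure x N) u - hfun (empiricalMeasure x N) d|
            + |hfun (empiricalMeasure x N) d - hfun μ d| + |hfun μ d - hfun μ u| := by
        have t1 := abs_sub_le (hfun (empiricalMeasure x N) u)
          (hfun (empiricalMeasure x N) d) (hfun μ u)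
        have t2 := abs_sub_le (hfun (empiricalMeasure x N) d) (hfun μ d) (hfun μ u)
        linarith
      have b1 : |hfun (empiricalMeasure x N) u - hfun (empiricalMeasure x N) d|
          ≤ (C + 1) * δ := by
        refine hl1.trans ?_
        exact mul_le_mul hN2 hud'.le (norm_nonneg _) (by linarith)
      have b2 : |hfun μ d - hfun μ u| ≤ C * δ := by
        refine hl2.trans ?_
        rw [hdu]
        exact mul_le_mul_of_nonneg_left hud'.le hC0
      have hδε : (2 * C + 2) * δ = ε / 3 := by
        rw [hδdef]; field_simp
      linarith
    have hεn : (0:ℝ) ≤ ε := hε.le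
    refine hausdorffDist_le (integrable_id_empirical x N) hμint hεn
      (hfun_le_of_ball fun u h => hball u h) (hfun_le_of_ball fun u h => by rw [abs_sub_comm]; exact hball u h)
  have hnn : ∀ N, 0 ≤ Metric.hausdorffDist (zonoid (empiricalMeasure x N)) (zonoid μ) :=
    fun N => Metric.hausdorffDist_nonneg
  refine tendsto_order.2 ⟨fun a ha => ?_, fun a ha => ?_⟩
  · exact Eventually.of_forall fun N => lt_of_lt_of_le ha (hnn N)
  · filter_upwards [claim (a / 2) (half_pos ha)] with N h
    linarith

end EmpZonoid

open EmpZonoid in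
theorem empirical_zonoid_convergence {n : ℕ}
    {Ω : Type*} [MeasureSpace Ω] [IsProbabilityMeasure (ℙ : Measure Ω)]
    (X : ℕ → Ω → EuclideanSpace ℝ (Fin n)) (hXm : ∀ i, Measurable (X i))
    (hindep : iIndepFun X ℙ)
    (μ : Measure (EuclideanSpace ℝ (Fin n))) [IsProbabilityMeasure μ]
    (hdist : ∀ i, Measure.map (X i) ℙ = μ)
    (hμint : Integrable (fun x => x) μ)
    (hsupp : μ (octant n)ᶜ = 0) :
    ∀ᵐ ω ∂(ℙ : Measure Ω),
      Tendsto (fun N => Metric.hausdorffDist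
          (zonoid (empiricalMeasure (fun i => X i ω) N)) (zonoid μ)) atTop (𝓝 0) := by
  classical
  have slln : ∀ f : EuclideanSpace ℝ (Fin n) → ℝ, Continuous f → Integrable f μ →
      ∀ᵐ ω ∂(ℙ : Measure Ω), Tendsto
        (fun N => ∫ y, f y ∂(empiricalMeasure (fun i => X i ω) N)) atTop (𝓝 (∫ y, f y ∂μ)) := by
    intro f hf hint
    have hfm := hf.measurable
    have hYint : Integrable (fun ω => f (X 0 ω)) ℙ := by
      have h := (integrable_map_measure hf.aestronglyMeasurable (hXm 0).aemeasurable).1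
        (by rw [hdist 0]; exact hint)
      exact h
    have hYindep : Pairwise (Function.onFun (IndepFun · · (ℙ : Measure Ω)) fun i ω => f (X i ω)) :=
      fun i j hij => (hindep.indepFun hij).comp hfm hfm
    have hYident : ∀ i, IdentDistrib (fun ω => f (X i ω)) (fun ω => f (X 0 ω))
        (ℙ : Measure Ω) (ℙ : Measure Ω) := fun i =>
      IdentDistrib.comp ⟨(hXm i).aemeasurable, (hXm 0).aemeasurable,
        by rw [hdist i, hdist 0]⟩ hfm
    have h := strong_law_ae_real _ hYint hYindep hYident
    have hE : (∫ ω, f (X 0 ω) ∂(ℙ : Measure Ω)) = ∫ y, f y ∂μ := by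
      rw [← hdist 0, integral_map (hXm 0).aemeasurable hf.aestronglyMeasurable]
    filter_upwards [h] with ω hω
    have e : ∀ N : ℕ, (∫ y, f y ∂(empiricalMeasure (fun i => X i ω) N))
        = (∑ i ∈ Finset.range N, f (X i ω)) / N := by
      intro N
      rw [integral_empirical hf (fun i => X i ω) N, smul_eq_mul, div_eq_inv_mul]
    rw [hE] at hω
    exact (tendsto_congr e).2 hω
  obtain ⟨D, hDc, hDd⟩ := TopologicalSpace.exists_countable_dense (EuclideanSpace ℝ (Fin n))
  have hA : ∀ᵐ ω ∂(ℙ : Measure Ω), ∀ d ∈ D,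
      Tendsto (fun N => hfun (empiricalMeasure (fun i => X i ω) N) d) atTop (𝓝 (hfun μ d)) := by
    rw [ae_ball_iff hDc]
    intro d _
    exact slln (fun y => max ⟪d, y⟫ 0) (contf d) (integrable_posInner hμint d)
  have hB := slln (fun y => ‖y‖) continuous_norm hμint.norm
  filter_upwards [hA, hB] with ω hω1 hω2
  exact det_tendsto _ μ hμint hDd hω1 hω2
end

section
/- Let (μ_k) and μ be Borel probability measures with finite first moment supported in ℝ^{m+1}₊, with V_{m+1}(P(μ)) ≠ 0 and V_{m+1}(P(μ_k)) ≠ 0 for all k. If μ_k converges weakly to μ and m(μ_k) → m(μ), then the generalized Gini indices G(Z(μ_k)) = V_{m+1}(Z(μ_k))/V_{m+1}(P(μ_k)) converge to G(Z(μ)). -/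
open MeasureTheory Pointwise Filter Topology

/-- The box (parallelotope) with opposite vertices `0` and `v`. -/
def parbox {n : ℕ} (v : EuclideanSpace ℝ (Fin n)) : Set (EuclideanSpace ℝ (Fin n)) :=
  {z | ∀ j, 0 ≤ z j ∧ z j ≤ v j}

namespace GiniAux

variable {n : ℕ}

local notation "E" => EuclideanSpace ℝ (Fin n)

/-- support function candidate -/
noncomputable def H (ν : Measure E) (u : E) : ℝ := ∫ x, max (inner ℝ u x : ℝ) 0 ∂ν

lemma integrable_innerpos (ν : Measure E) (hint : Integrable (fun x => x) ν) (u : E) :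
    Integrable (fun x => max (inner ℝ u x : ℝ) 0) ν := by
  have hb : Integrable (fun x : E => ‖u‖ * ‖x‖) ν := hint.norm.const_mul _
  refine hb.mono' ?_ ?_
  · exact (((continuous_const.inner continuous_id).max continuous_const)).aestronglyMeasurable
  · refine Filter.Eventually.of_forall fun x => ?_
    have h1 : |(inner ℝ u x : ℝ)| ≤ ‖u‖ * ‖x‖ := abs_real_inner_le_norm u x
    have habs : ∀ a : ℝ, |max a 0| ≤ |a| := by
      intro a
      rcases le_or_gt a 0 with h | h
      · rw [max_eq_right h]; simp [abs_nonneg]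
      · rw [max_eq_left h.le]
    simpa [Real.norm_eq_abs] using (habs _).trans h1

lemma integrable_smul_phi (ν : Measure E) (hint : Integrable (fun x => x) ν)
    {φ : E → ℝ} (hφ : Measurable φ) (hφ01 : ∀ x, φ x ∈ Set.Icc (0:ℝ) 1) :
    Integrable (fun x => φ x • x) ν := by
  refine hint.norm.mono' ?_ ?_
  · exact (hφ.aestronglyMeasurable.smul aestronglyMeasurable_id)
  · refine Filter.Eventually.of_forall fun x => ?_
    have : ‖φ x • x‖ = |φ x| * ‖x‖ := by simp [norm_smul, Real.norm_eq_abs]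
    rw [this]
    have h0 := (hφ01 x).1; have h1 := (hφ01 x).2
    calc |φ x| * ‖x‖ ≤ 1 * ‖x‖ := by
          apply mul_le_mul_of_nonneg_right _ (norm_nonneg x)
          rw [abs_of_nonneg h0]; exact h1
      _ = ‖x‖ := one_mul _

lemma integrable_phi_inner (ν : Measure E) (hint : Integrable (fun x => x) ν)
    {φ : E → ℝ} (hφ : Measurable φ) (hφ01 : ∀ x, φ x ∈ Set.Icc (0:ℝ) 1) (u : E) :
    Integrable (fun x => φ x * (inner ℝ u x : ℝ)) ν := by
  have hb : Integrable (fun x : E => ‖u‖ * ‖x‖) ν := hint.norm.const_mul _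
  refine hb.mono' ?_ ?_
  · exact hφ.aestronglyMeasurable.mul
      (continuous_const.inner continuous_id).aestronglyMeasurable
  · refine Filter.Eventually.of_forall fun x => ?_
    have h1 : |(inner ℝ u x : ℝ)| ≤ ‖u‖ * ‖x‖ := abs_real_inner_le_norm u x
    have h0 := (hφ01 x).1; have h2 := (hφ01 x).2
    have : |φ x * (inner ℝ u x : ℝ)| = |φ x| * |(inner ℝ u x : ℝ)| := abs_mul _ _
    rw [Real.norm_eq_abs, this]
    calc |φ x| * |(inner ℝ u x : ℝ)| ≤ 1 * |(inner ℝ u x : ℝ)| := by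
          apply mul_le_mul_of_nonneg_right _ (abs_nonneg _)
          rw [abs_of_nonneg h0]; exact h2
      _ = |(inner ℝ u x : ℝ)| := one_mul _
      _ ≤ ‖u‖ * ‖x‖ := h1

lemma inner_le_H (ν : Measure E) (hint : Integrable (fun x => x) ν)
    {z : E} (hz : z ∈ zonoid ν) (u : E) : (inner ℝ u z : ℝ) ≤ H ν u := by
  obtain ⟨φ, hφ, hφ01, rfl⟩ := hz
  have hip : (inner ℝ u (∫ x, φ x • x ∂ν) : ℝ) = ∫ x, φ x * (inner ℝ u x : ℝ) ∂ν := by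
    have h := (innerSL ℝ u).integral_comp_comm (integrable_smul_phi ν hint hφ hφ01)
    simp only [innerSL_apply_apply] at h
    rw [← h]
    congr 1; funext x
    rw [real_inner_smul_right]
  rw [hip]
  refine integral_mono (integrable_phi_inner ν hint hφ hφ01 u) (integrable_innerpos ν hint u)
    fun x => ?_
  have h0 := (hφ01 x).1; have h2 := (hφ01 x).2
  rcases le_or_gt (inner ℝ u x : ℝ) 0 with h | h
  · calc φ x * (inner ℝ u x : ℝ) ≤ 0 := mul_nonpos_of_nonneg_of_nonpos h0 h
      _ ≤ max _ 0 := le_max_right _ _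
  · calc φ x * (inner ℝ u x : ℝ) ≤ 1 * (inner ℝ u x : ℝ) :=
        mul_le_mul_of_nonneg_right h2 h.le
      _ = (inner ℝ u x : ℝ) := one_mul _
      _ ≤ max _ 0 := le_max_left _ _

lemma exists_zonoid_inner_eq (ν : Measure E) (hint : Integrable (fun x => x) ν) (u : E) :
    ∃ z ∈ zonoid ν, (inner ℝ u z : ℝ) = H ν u := by
  classical
  set φ : E → ℝ := fun x => if (0:ℝ) < inner ℝ u x then 1 else 0 with hφdef
  have hφ : Measurable φ := by
    apply Measurable.ite _ measurable_const measurable_const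
    exact measurableSet_lt measurable_const ((innerSL ℝ u).continuous.measurable)
  have hφ01 : ∀ x, φ x ∈ Set.Icc (0:ℝ) 1 := by
    intro x
    simp only [hφdef]
    split_ifs <;> norm_num
  refine ⟨∫ x, φ x • x ∂ν, ⟨φ, hφ, hφ01, rfl⟩, ?_⟩
  have hip : (inner ℝ u (∫ x, φ x • x ∂ν) : ℝ) = ∫ x, φ x * (inner ℝ u x : ℝ) ∂ν := by
    have h := (innerSL ℝ u).integral_comp_comm (integrable_smul_phi ν hint hφ hφ01)
    simp only [innerSL_apply_apply] at h
    rw [← h]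
    congr 1; funext x
    rw [real_inner_smul_right]
  rw [hip]
  congr 1; funext x
  simp only [hφdef]
  split_ifs with h
  · rw [one_mul, max_eq_left h.le]
  · rw [zero_mul, max_eq_right (not_lt.mp h)]

lemma zero_mem_zonoid (ν : Measure E) : (0 : E) ∈ zonoid ν := by
  refine ⟨fun _ => 0, measurable_const, fun x => by simp, ?_⟩
  simp

lemma convex_zonoid (ν : Measure E) (hint : Integrable (fun x => x) ν) :
    Convex ℝ (zonoid ν) := by
  rintro z1 ⟨φ1, hφ1, h1, rfl⟩ z2 ⟨φ2, hφ2, h2, rfl⟩ a b ha hb hab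
  refine ⟨fun x => a * φ1 x + b * φ2 x, (hφ1.const_mul a).add (hφ2.const_mul b), ?_, ?_⟩
  · intro x
    constructor
    · exact add_nonneg (mul_nonneg ha (h1 x).1) (mul_nonneg hb (h2 x).1)
    · calc a * φ1 x + b * φ2 x ≤ a * 1 + b * 1 := by
            apply add_le_add (mul_le_mul_of_nonneg_left (h1 x).2 ha)
              (mul_le_mul_of_nonneg_left (h2 x).2 hb)
        _ = 1 := by rw [mul_one, mul_one, hab]
  · have hfe : (fun x : E => (a * φ1 x + b * φ2 x) • x)
        = fun x => a • (φ1 x • x) + b • (φ2 x • x) := by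
      funext x; rw [add_smul, mul_smul, mul_smul]
    show a • (∫ x, φ1 x • x ∂ν) + b • (∫ x, φ2 x • x ∂ν) = _
    have hA : Integrable (fun x => a • (φ1 x • x)) ν :=
      (integrable_smul_phi ν hint hφ1 h1).smul a
    have hB : Integrable (fun x => b • (φ2 x • x)) ν :=
      (integrable_smul_phi ν hint hφ2 h2).smul b
    rw [hfe, integral_add hA hB, integral_smul, integral_smul]

/-- The closed convex hull candidate: intersection of half-spaces. -/
def Zc (ν : Measure E) : Set E := {z | ∀ u : E, (inner ℝ u z : ℝ) ≤ H ν u}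

lemma isClosed_Zc (ν : Measure E) : IsClosed (Zc ν) := by
  have : Zc ν = ⋂ u : E, {z | (inner ℝ u z : ℝ) ≤ H ν u} := by
    ext z; simp [Zc, Set.mem_iInter]
  rw [this]
  exact isClosed_iInter fun u =>
    isClosed_le (continuous_const.inner continuous_id) continuous_const

lemma convex_Zc (ν : Measure E) : Convex ℝ (Zc ν) := by
  have : Zc ν = ⋂ u : E, {z | (inner ℝ u z : ℝ) ≤ H ν u} := by
    ext z; simp [Zc, Set.mem_iInter]
  rw [this]
  refine convex_iInter fun u => ?_
  have : {z : E | (inner ℝ u z : ℝ) ≤ H ν u} = {z | (innerSL ℝ u) z ≤ H ν u} := rfl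
  rw [this]
  exact convex_halfSpace_le (LinearMap.isLinear _) _

lemma zonoid_subset_Zc (ν : Measure E) (hint : Integrable (fun x => x) ν) :
    zonoid ν ⊆ Zc ν := fun _ hz u => inner_le_H ν hint hz u

lemma Zc_subset_closure (ν : Measure E) (hint : Integrable (fun x => x) ν) :
    Zc ν ⊆ closure (zonoid ν) := by
  intro z hz
  by_contra hzc
  obtain ⟨f, c, hfz, hfb⟩ := geometric_hahn_banach_point_closed
    ((convex_zonoid ν hint).closure) isClosed_closure hzc
  -- f z < c < f b for all b in closure
  obtain ⟨v, hv⟩ : ∃ v : E, ∀ w : E, f w = (inner ℝ v w : ℝ) := by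
    refine ⟨(InnerProductSpace.toDual ℝ E).symm f, fun w => ?_⟩
    simp [InnerProductSpace.toDual_symm_apply]
  -- Use direction -v : sup attained
  obtain ⟨z₀, hz₀m, hz₀⟩ := exists_zonoid_inner_eq ν hint (-v)
  have h1 : (inner ℝ (-v) z : ℝ) ≤ H ν (-v) := hz (-v)
  have h2 := hfb z₀ (subset_closure hz₀m)
  -- f z₀ = inner ℝ v z₀ = - inner ℝ (-v) z₀ = - H ν (-v)
  rw [hv z₀] at h2
  rw [hv z] at hfz
  have hvz : (inner ℝ v z : ℝ) = -(inner ℝ (-v) z : ℝ) := by simp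
  have hvz₀ : (inner ℝ v z₀ : ℝ) = -(inner ℝ (-v) z₀ : ℝ) := by simp
  rw [hvz₀, hz₀] at h2
  rw [hvz] at hfz
  linarith

lemma H_le_norm (ν : Measure E) [IsProbabilityMeasure ν] (hint : Integrable (fun x => x) ν)
    (u : E) : H ν u ≤ ‖u‖ * ∫ x, ‖x‖ ∂ν := by
  have : (∫ x, ‖u‖ * ‖x‖ ∂ν) = ‖u‖ * ∫ x, ‖x‖ ∂ν := integral_const_mul _ _
  rw [← this]
  refine integral_mono (integrable_innerpos ν hint u) (hint.norm.const_mul _) fun x => ?_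
  have h1 : |(inner ℝ u x : ℝ)| ≤ ‖u‖ * ‖x‖ := abs_real_inner_le_norm u x
  rcases le_or_gt (inner ℝ u x : ℝ) 0 with h | h
  · rw [max_eq_right h]; positivity
  · rw [max_eq_left h.le]; exact (le_abs_self _).trans h1

lemma Zc_bounded (ν : Measure E) [IsProbabilityMeasure ν] (hint : Integrable (fun x => x) ν) :
    Zc ν ⊆ Metric.closedBall 0 (∫ x, ‖x‖ ∂ν) := by
  intro z hz
  rw [Metric.mem_closedBall, dist_zero_right]
  by_cases h0 : z = 0
  · rw [h0, norm_zero]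
    exact integral_nonneg fun x => norm_nonneg x
  · have h1 : (inner ℝ z z : ℝ) ≤ H ν z := hz z
    have h2 : H ν z ≤ ‖z‖ * ∫ x, ‖x‖ ∂ν := H_le_norm ν hint z
    have h3 : ‖z‖ * ‖z‖ ≤ ‖z‖ * ∫ x, ‖x‖ ∂ν := by
      rw [← real_inner_self_eq_norm_mul_norm]
      exact h1.trans h2
    exact le_of_mul_le_mul_left h3 (norm_pos_iff.mpr h0)

lemma isCompact_Zc (ν : Measure E) [IsProbabilityMeasure ν]
    (hint : Integrable (fun x => x) ν) : IsCompact (Zc ν) := by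
  have hb : Bornology.IsBounded (Zc ν) :=
    (Metric.isBounded_closedBall).subset (Zc_bounded ν hint)
  exact Metric.isCompact_of_isClosed_isBounded (isClosed_Zc ν) hb

lemma volume_zonoid_eq_Zc (ν : Measure E) (hint : Integrable (fun x => x) ν) :
    volume (zonoid ν) = volume (Zc ν) := by
  have h1 : volume (closure (zonoid ν)) ≤ volume (zonoid ν) := by
    have hsub : closure (zonoid ν) ⊆ zonoid ν ∪ frontier (zonoid ν) := by
      intro x hx
      by_cases h : x ∈ zonoid ν
      · exact Or.inl h
      · exact Or.inr ⟨hx, fun hi => h (interior_subset hi)⟩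
    calc volume (closure (zonoid ν)) ≤ volume (zonoid ν) + volume (frontier (zonoid ν)) :=
          le_trans (measure_mono hsub) (measure_union_le _ _)
      _ = volume (zonoid ν) := by
          rw [Convex.addHaar_frontier volume (convex_zonoid ν hint), add_zero]
  apply le_antisymm
  · exact measure_mono (zonoid_subset_Zc ν hint)
  · calc volume (Zc ν) ≤ volume (closure (zonoid ν)) :=
        measure_mono (Zc_subset_closure ν hint)
      _ ≤ volume (zonoid ν) := h1

lemma H_smul (ν : Measure E) (u : E) {c : ℝ} (hc : 0 ≤ c) :
    H ν (c • u) = c * H ν u := by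
  unfold H
  rw [← integral_const_mul]
  congr 1; funext x
  rw [real_inner_smul_left]
  rcases le_or_gt (inner ℝ u x : ℝ) 0 with h | h
  · rw [max_eq_right h, max_eq_right (mul_nonpos_of_nonneg_of_nonpos hc h), mul_zero]
  · rw [max_eq_left h.le, max_eq_left (mul_nonneg hc h.le)]

lemma H_lipschitz (ν : Measure E) (hint : Integrable (fun x => x) ν) (u v : E) :
    |H ν u - H ν v| ≤ ‖u - v‖ * ∫ x, ‖x‖ ∂ν := by
  have hiu := integrable_innerpos ν hint u
  have hiv := integrable_innerpos ν hint v
  have h1 : H ν u - H ν v = ∫ x, (max (inner ℝ u x : ℝ) 0 - max (inner ℝ v x : ℝ) 0) ∂ν := by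
    rw [integral_sub hiu hiv]; rfl
  rw [h1]
  calc |∫ x, (max (inner ℝ u x : ℝ) 0 - max (inner ℝ v x : ℝ) 0) ∂ν|
      ≤ ∫ x, |max (inner ℝ u x : ℝ) 0 - max (inner ℝ v x : ℝ) 0| ∂ν := by
        simpa [Real.norm_eq_abs] using norm_integral_le_integral_norm (μ := ν)
          (f := fun x => max (inner ℝ u x : ℝ) 0 - max (inner ℝ v x : ℝ) 0)
    _ ≤ ∫ x, ‖u - v‖ * ‖x‖ ∂ν := by
        refine integral_mono ((hiu.sub hiv).abs) (hint.norm.const_mul _) fun x => ?_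
        have h2 : |max (inner ℝ u x : ℝ) 0 - max (inner ℝ v x : ℝ) 0|
            ≤ |(inner ℝ u x : ℝ) - (inner ℝ v x : ℝ)| := abs_max_sub_max_le_abs _ _ _
        have h3 : (inner ℝ u x : ℝ) - (inner ℝ v x : ℝ) = inner ℝ (u - v) x := by
          rw [inner_sub_left]
        rw [h3] at h2
        exact h2.trans (abs_real_inner_le_norm _ _)
    _ = ‖u - v‖ * ∫ x, ‖x‖ ∂ν := integral_const_mul _ _

lemma H_nonneg (ν : Measure E) (u : E) : 0 ≤ H ν u :=
  integral_nonneg fun x => le_max_right _ _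

lemma zero_mem_Zc (ν : Measure E) : (0 : E) ∈ Zc ν := by
  intro u
  rw [inner_zero_right]
  exact H_nonneg ν u

lemma Zc_subset_cthickening {ν ν' : Measure E} (hint : Integrable (fun x => x) ν')
    {ε : ℝ} (hε : 0 ≤ ε) (hH : ∀ u : E, H ν u ≤ H ν' u + ε * ‖u‖) :
    Zc ν ⊆ Metric.cthickening ε (Zc ν') := by
  intro z hz
  have hK : Convex ℝ (Zc ν') := convex_Zc ν'
  have hKc : IsClosed (Zc ν') := isClosed_Zc ν'
  obtain ⟨p, hp, hpm⟩ := exists_norm_eq_iInf_of_complete_convex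
    ⟨0, zero_mem_Zc ν'⟩ hKc.isComplete hK z
  have hvar := (norm_eq_iInf_iff_real_inner_le_zero hK hp).mp hpm
  set u := z - p with hu
  obtain ⟨w₀, hw₀m, hw₀⟩ := exists_zonoid_inner_eq ν' hint u
  have hw₀K : w₀ ∈ Zc ν' := zonoid_subset_Zc ν' hint hw₀m
  have h1 : (inner ℝ u z : ℝ) ≤ H ν u := hz u
  have h2 : H ν' u ≤ (inner ℝ u p : ℝ) := by
    rw [← hw₀]
    have := hvar w₀ hw₀K
    have hexp : (inner ℝ u w₀ : ℝ) = inner ℝ u (w₀ - p) + inner ℝ u p := by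
      rw [← inner_add_right]; congr 1; abel
    rw [hexp]
    linarith
  have h3 : ‖u‖ ^ 2 ≤ ε * ‖u‖ := by
    have : (inner ℝ u u : ℝ) = inner ℝ u z - inner ℝ u p := by
      rw [← inner_sub_right]
    rw [← real_inner_self_eq_norm_sq, this]
    have := hH u
    linarith
  have h4 : ‖u‖ ≤ ε := by
    by_cases h0 : ‖u‖ = 0
    · rw [h0]; exact hε
    · have hpos : 0 < ‖u‖ := lt_of_le_of_ne (norm_nonneg u) (Ne.symm h0)
      nlinarith
  exact Metric.mem_cthickening_of_dist_le z p ε _ hp (by rw [dist_eq_norm]; exact h4)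

lemma shrink_subset_Zc {ν ν' : Measure E} {c : E} {r ε : ℝ} (hr : 0 < r)
    (hball : Metric.ball c r ⊆ Zc ν') (hε : 0 ≤ ε) (hεr : ε ≤ r)
    (hH : ∀ u : E, H ν' u ≤ H ν u + ε * ‖u‖) :
    (fun z => c + (1 - ε / r) • (z - c)) '' Zc ν' ⊆ Zc ν := by
  have hcball : Metric.closedBall c r ⊆ Zc ν' := by
    rw [← closure_ball c hr.ne']
    exact closure_minimal hball (isClosed_Zc ν')
  set t := ε / r with ht
  have ht0 : 0 ≤ t := div_nonneg hε hr.le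
  have ht1 : t ≤ 1 := (div_le_one hr).mpr hεr
  rintro w ⟨z, hz, rfl⟩
  intro u
  have hcu : (inner ℝ u c : ℝ) + r * ‖u‖ ≤ H ν' u := by
    by_cases h0 : u = 0
    · simp [h0]; exact H_nonneg ν' 0
    · have hq : c + (r / ‖u‖) • u ∈ Metric.closedBall c r := by
        rw [Metric.mem_closedBall, dist_eq_norm]
        have : c + (r / ‖u‖) • u - c = (r / ‖u‖) • u := by abel
        rw [this, norm_smul, Real.norm_eq_abs, abs_of_nonneg
          (div_nonneg hr.le (norm_nonneg u)), div_mul_cancel₀]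
        exact norm_ne_zero_iff.mpr h0
      have := hcball hq u
      rw [inner_add_right, real_inner_smul_right, real_inner_self_eq_norm_sq] at this
      have hne : ‖u‖ ≠ 0 := norm_ne_zero_iff.mpr h0
      have heq : r / ‖u‖ * ‖u‖ ^ 2 = r * ‖u‖ := by
        field_simp
      rw [heq] at this
      exact this
  have hz' : (inner ℝ u z : ℝ) ≤ H ν' u := hz u
  have hw : (inner ℝ u (c + (1 - t) • (z - c)) : ℝ)
      = (1 - t) * inner ℝ u z + t * inner ℝ u c := by
    rw [inner_add_right, real_inner_smul_right, inner_sub_right]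
    ring
  rw [hw]
  have htr : t * r = ε := by
    rw [ht, div_mul_cancel₀]; exact hr.ne'
  have step1 : (1 - t) * (inner ℝ u z : ℝ) ≤ (1 - t) * H ν' u :=
    mul_le_mul_of_nonneg_left hz' (by linarith)
  have step2 : t * (inner ℝ u c : ℝ) ≤ t * (H ν' u - r * ‖u‖) :=
    mul_le_mul_of_nonneg_left (by linarith) ht0
  have := hH u
  have hexp : t * (H ν' u - r * ‖u‖) = t * H ν' u - ε * ‖u‖ := by
    rw [mul_sub, ← mul_assoc, htr]
  linarith [step1, step2, hH u]

lemma volume_homothety_image (c : E) {s : ℝ} (hs : 0 ≤ s) (A : Set E) :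
    volume ((fun z => c + s • (z - c)) '' A) = ENNReal.ofReal (s ^ n) * volume A := by
  have himg : (fun z => c + s • (z - c)) '' A = (c - s • c) +ᵥ (s • A) := by
    ext w
    constructor
    · rintro ⟨z, hz, rfl⟩
      refine ⟨s • z, Set.smul_mem_smul_set hz, ?_⟩
      show (c - s • c) + s • z = c + s • (z - c)
      rw [smul_sub]; abel
    · rintro ⟨y, ⟨z, hz, rfl⟩, rfl⟩
      refine ⟨z, hz, ?_⟩
      show c + s • (z - c) = (c - s • c) + s • z
      rw [smul_sub]; abel
  rw [himg, measure_vadd, Measure.addHaar_smul, finrank_euclideanSpace_fin,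
    abs_of_nonneg (pow_nonneg hs n)]

lemma ae_octant (ν : Measure E) (h : ν (octant n)ᶜ = 0) : ∀ᵐ x ∂ν, x ∈ octant n := by
  rw [ae_iff]
  exact h

/-- sum of coordinates, as a continuous linear map -/
noncomputable def lsum : E →L[ℝ] ℝ := ∑ i : Fin n, EuclideanSpace.proj i

lemma lsum_apply (x : E) : lsum x = ∑ i, x i := by
  simp [lsum, ContinuousLinearMap.sum_apply]

lemma norm_le_lsum {x : E} (hx : x ∈ octant n) : ‖x‖ ≤ lsum x := by
  rw [lsum_apply, EuclideanSpace.norm_eq]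
  have h1 : ∑ i, ‖x i‖ ^ 2 ≤ (∑ i, x i) ^ 2 := by
    have : ∀ i, ‖x i‖ ^ 2 = (x i) ^ 2 := fun i => by
      rw [Real.norm_eq_abs, sq_abs]
    simp_rw [this]
    exact Finset.sum_sq_le_sq_sum_of_nonneg fun i _ => hx i
  calc √(∑ i, ‖x i‖ ^ 2) ≤ √((∑ i, x i) ^ 2) := Real.sqrt_le_sqrt h1
    _ = |∑ i, x i| := Real.sqrt_sq_eq_abs _
    _ = ∑ i, x i := abs_of_nonneg (Finset.sum_nonneg fun i _ => hx i)

lemma lsum_nonneg {x : E} (hx : x ∈ octant n) : 0 ≤ lsum x := by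
  rw [lsum_apply]
  exact Finset.sum_nonneg fun i _ => hx i

/-- clamp to [0, M] -/
def clamp (M t : ℝ) : ℝ := min (max t 0) M

lemma clamp_mem {M : ℝ} (hM : 0 ≤ M) (t : ℝ) : clamp M t ∈ Set.Icc 0 M :=
  ⟨le_min (le_max_right _ _) hM, min_le_right _ _⟩

lemma clamp_continuous (M : ℝ) : Continuous fun t => clamp M t :=
  ((continuous_id.max continuous_const).min continuous_const)

/-- clamped bounded continuous function -/
noncomputable def clampBCF (g : E → ℝ) (hg : Continuous g) (M : ℝ) (hM : 0 ≤ M) :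
    BoundedContinuousFunction E ℝ :=
  BoundedContinuousFunction.mkOfBound ⟨fun x => clamp M (g x),
    (clamp_continuous M).comp hg⟩ M (by
      intro x y
      rw [Real.dist_eq]
      have h1 := clamp_mem hM (g x)
      have h2 := clamp_mem hM (g y)
      rw [abs_sub_le_iff]
      constructor <;> [skip; skip] <;>
        · obtain ⟨a1, a2⟩ := h1; obtain ⟨b1, b2⟩ := h2; dsimp at *; linarith)

lemma clampBCF_apply (g : E → ℝ) (hg : Continuous g) (M : ℝ) (hM : 0 ≤ M) (x : E) :
    clampBCF g hg M hM x = clamp M (g x) := rfl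

lemma clamp_le_max (M t : ℝ) : clamp M t ≤ max t 0 := min_le_left _ _

lemma clamp_tail {a b c M : ℝ} (ha : 0 ≤ a) (hab : a ≤ c * b) (hb : 0 ≤ b) (hc : 0 < c)
    (hM : 0 ≤ M) : a - clamp (c * M) a ≤ c * (b - clamp M b) := by
  unfold clamp
  rw [max_eq_left ha, max_eq_left hb]
  rcases le_total a (c * M) with h | h
  · rw [min_eq_left h]
    have : min b M ≤ b := min_le_left _ _
    have : 0 ≤ b - min b M := by linarith
    nlinarith
  · rw [min_eq_right h]
    have hMb : M ≤ b := by
      have : c * M ≤ c * b := le_trans h hab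
      exact le_of_mul_le_mul_left this hc
    rw [min_eq_right hMb]
    nlinarith

lemma integrable_clamp (ν : Measure E) [IsProbabilityMeasure ν] {g : E → ℝ}
    (hgc : Continuous g) {M : ℝ} (hM : 0 ≤ M) :
    Integrable (fun x => clamp M (g x)) ν := by
  refine (integrable_const M).mono' ((clamp_continuous M).comp hgc).aestronglyMeasurable ?_
  refine Filter.Eventually.of_forall fun x => ?_
  obtain ⟨h1, h2⟩ := clamp_mem hM (g x)
  rw [Real.norm_eq_abs, abs_of_nonneg h1]
  exact h2

lemma H_tendsto (νk : ℕ → Measure E) (ν : Measure E)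
    [∀ k, IsProbabilityMeasure (νk k)] [IsProbabilityMeasure ν]
    (hint : ∀ k, Integrable (fun x => x) (νk k)) (hν : Integrable (fun x => x) ν)
    (hso : ∀ k, νk k (octant n)ᶜ = 0) (hsν : ν (octant n)ᶜ = 0)
    (hweak : ∀ f : BoundedContinuousFunction E ℝ,
      Filter.Tendsto (fun k => ∫ x, f x ∂(νk k)) Filter.atTop (𝓝 (∫ x, f x ∂ν)))
    (hmean : Filter.Tendsto (fun k => ∫ x, x ∂(νk k)) Filter.atTop (𝓝 (∫ x, x ∂ν)))
    (u : E) :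
    Filter.Tendsto (fun k => H (νk k) u) Filter.atTop (𝓝 (H ν u)) := by
  classical
  set c : ℝ := ‖u‖ + 1 with hcdef
  have hc : 0 < c := by positivity
  set g : E → ℝ := fun x => max (inner ℝ u x : ℝ) 0 with hgdef
  have hgc : Continuous g := (continuous_const.inner continuous_id).max continuous_const
  have hg0 : ∀ x, 0 ≤ g x := fun x => le_max_right _ _
  set τ : E → ℝ := fun x => lsum x with hτdef
  have hτc : Continuous τ := lsum.continuous
  -- integrability
  have hig : ∀ k, Integrable g (νk k) := fun k => integrable_innerpos _ (hint k) u
  have higν : Integrable g ν := integrable_innerpos _ hν u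
  have hiτ : ∀ k, Integrable τ (νk k) := fun k => lsum.integrable_comp (hint k)
  have hiτν : Integrable τ ν := lsum.integrable_comp hν
  -- mean of τ converges
  have hT : Filter.Tendsto (fun k => ∫ x, τ x ∂(νk k)) Filter.atTop (𝓝 (∫ x, τ x ∂ν)) := by
    have hTk : ∀ k, ∫ x, τ x ∂(νk k) = lsum (∫ x, x ∂(νk k)) := fun k =>
      lsum.integral_comp_comm (hint k)
    have hTν : ∫ x, τ x ∂ν = lsum (∫ x, x ∂ν) := lsum.integral_comp_comm hν
    simp_rw [hTk, hTν]
    exact (lsum.continuous.tendsto _).comp hmean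
  -- clamped integrals converge
  have hclamp : ∀ (f : E → ℝ) (hfc : Continuous f) (M : ℝ) (hM : 0 ≤ M),
      Filter.Tendsto (fun k => ∫ x, clamp M (f x) ∂(νk k)) Filter.atTop
        (𝓝 (∫ x, clamp M (f x) ∂ν)) := fun f hfc M hM => hweak (clampBCF f hfc M hM)
  -- a.e. bounds
  have haet : ∀ (ρ : Measure E), ρ (octant n)ᶜ = 0 →
      (∀ᵐ x ∂ρ, 0 ≤ τ x ∧ g x ≤ c * τ x) := by
    intro ρ hρ
    filter_upwards [ae_octant ρ hρ] with x hx
    have h1 : 0 ≤ τ x := lsum_nonneg hx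
    refine ⟨h1, ?_⟩
    have h2 : (inner ℝ u x : ℝ) ≤ ‖u‖ * ‖x‖ := real_inner_le_norm u x
    have h3 : ‖x‖ ≤ τ x := norm_le_lsum hx
    have h4 : ‖u‖ * ‖x‖ ≤ c * τ x := by
      apply mul_le_mul (by rw [hcdef]; linarith) h3 (norm_nonneg x) (by positivity)
    refine max_le (h2.trans h4) (by positivity)
  -- tail bound for a measure
  have htail : ∀ (ρ : Measure E) [IsProbabilityMeasure ρ], Integrable (fun x => x) ρ →
      ρ (octant n)ᶜ = 0 → Integrable g ρ → Integrable τ ρ → ∀ M' : ℝ, 0 ≤ M' →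
      (0 ≤ ∫ x, g x ∂ρ - ∫ x, clamp (c * M') (g x) ∂ρ ∧
       ∫ x, g x ∂ρ - ∫ x, clamp (c * M') (g x) ∂ρ
         ≤ c * (∫ x, τ x ∂ρ - ∫ x, clamp M' (τ x) ∂ρ)) := by
    intro ρ _ hρint hρsupp higρ hiτρ M' hM'
    have hcM' : 0 ≤ c * M' := by positivity
    have hiclg : Integrable (fun x => clamp (c * M') (g x)) ρ := integrable_clamp ρ hgc hcM'
    have hiclτ : Integrable (fun x => clamp M' (τ x)) ρ := integrable_clamp ρ hτc hM'
    constructor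
    · rw [sub_nonneg]
      refine integral_mono hiclg higρ fun x => ?_
      exact (clamp_le_max _ _).trans (le_of_eq (max_eq_left (hg0 x)))
    · rw [← integral_sub higρ hiclg, ← integral_sub hiτρ hiclτ, ← integral_const_mul]
      refine integral_mono_ae (higρ.sub hiclg) ((hiτρ.sub hiclτ).const_mul c) ?_
      filter_upwards [haet ρ hρsupp] with x hx
      exact clamp_tail (hg0 x) hx.2 hx.1 hc hM'
  -- the tail of ν vanishes as M' → ∞
  have hνtail : Filter.Tendsto (fun j : ℕ => ∫ x, clamp (j : ℝ) (τ x) ∂ν) Filter.atTop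
      (𝓝 (∫ x, τ x ∂ν)) := by
    refine tendsto_integral_of_dominated_convergence (fun x => |τ x|)
      (fun j => ((clamp_continuous _).comp hτc).aestronglyMeasurable) hiτν.abs
      (fun j => Filter.Eventually.of_forall fun x => ?_) ?_
    · obtain ⟨h1, h2⟩ := clamp_mem (by positivity : (0:ℝ) ≤ (j:ℝ)) (τ x)
      rw [Real.norm_eq_abs, abs_of_nonneg h1]
      exact (clamp_le_max _ _).trans (max_le (le_abs_self _) (abs_nonneg _))
    · filter_upwards [haet ν hsν] with x hx
      have : ∀ᶠ j : ℕ in Filter.atTop, clamp (j : ℝ) (τ x) = τ x := by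
        rw [Filter.eventually_atTop]
        refine ⟨⌈τ x⌉₊, fun j hj => ?_⟩
        have hτj : τ x ≤ (j : ℝ) := (Nat.le_ceil _).trans (Nat.cast_le.mpr hj)
        unfold clamp
        rw [max_eq_left hx.1, min_eq_left hτj]
      have h7 : (fun j : ℕ => clamp (j : ℝ) (τ x)) =ᶠ[Filter.atTop] fun _ => τ x := this
      exact Filter.Tendsto.congr' h7.symm tendsto_const_nhds
  -- ε-argument
  rw [Metric.tendsto_nhds]
  intro ε hε
  -- choose M'
  have h8 : 0 < ε / 8 := by positivity
  obtain ⟨j, hj⟩ : ∃ j : ℕ, c * (∫ x, τ x ∂ν - ∫ x, clamp (j : ℝ) (τ x) ∂ν) < ε / 8 := by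
    have h4 : Filter.Tendsto (fun _ : ℕ => c * ∫ x, τ x ∂ν) Filter.atTop
        (𝓝 (c * ∫ x, τ x ∂ν)) := tendsto_const_nhds
    have h5 := h4.sub (hνtail.const_mul c)
    rw [sub_self] at h5
    have h6 : Filter.Tendsto (fun j : ℕ => c * (∫ x, τ x ∂ν - ∫ x, clamp (j:ℝ) (τ x) ∂ν))
        Filter.atTop (𝓝 0) := h5.congr fun j => by ring
    exact (h6.eventually (eventually_lt_nhds h8)).exists
  set M' : ℝ := (j : ℝ) with hM'def
  have hM' : 0 ≤ M' := by positivity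
  have hM : 0 ≤ c * M' := by positivity
  -- eventually bounds
  have hA := hclamp g hgc (c * M') hM
  have hBk : Filter.Tendsto
      (fun k => c * (∫ x, τ x ∂(νk k) - ∫ x, clamp M' (τ x) ∂(νk k))) Filter.atTop
      (𝓝 (c * (∫ x, τ x ∂ν - ∫ x, clamp M' (τ x) ∂ν))) :=
    ((hT.sub (hclamp τ hτc M' hM')).const_mul c)
  have hq : 0 < ε / 4 := by positivity
  have ev1 : ∀ᶠ k in Filter.atTop,
      dist (∫ x, clamp (c * M') (g x) ∂(νk k)) (∫ x, clamp (c * M') (g x) ∂ν) < ε / 4 :=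
    (Metric.tendsto_nhds.mp hA) _ hq
  have ev2 : ∀ᶠ k in Filter.atTop,
      c * (∫ x, τ x ∂(νk k) - ∫ x, clamp M' (τ x) ∂(νk k)) < ε / 4 := by
    have := hBk.eventually (eventually_lt_nhds (show c * (∫ x, τ x ∂ν
      - ∫ x, clamp M' (τ x) ∂ν) < ε/4 by linarith))
    exact this
  filter_upwards [ev1, ev2] with k h1 h2
  have hk1 := htail (νk k) (hint k) (hso k) (hig k) (hiτ k) M' hM'
  have hkν := htail ν hν hsν higν hiτν M' hM'
  rw [Real.dist_eq] at h1 ⊢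
  rw [abs_sub_lt_iff] at h1
  have hIk : H (νk k) u = ∫ x, g x ∂(νk k) := rfl
  have hIν : H ν u = ∫ x, g x ∂ν := rfl
  rw [hIk, hIν, abs_sub_lt_iff]
  obtain ⟨ha1, ha2⟩ := h1
  obtain ⟨hb1, hb2⟩ := hk1
  obtain ⟨hc1, hc2⟩ := hkν
  set X1 : ℝ := ∫ x, g x ∂(νk k) with hX1
  set X2 : ℝ := ∫ x, g x ∂ν with hX2
  set Y1 : ℝ := ∫ x, clamp (c * M') (g x) ∂(νk k) with hY1
  set Y2 : ℝ := ∫ x, clamp (c * M') (g x) ∂ν with hY2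
  set Z1 : ℝ := c * (∫ x, τ x ∂(νk k) - ∫ x, clamp M' (τ x) ∂(νk k)) with hZ1
  set Z2 : ℝ := c * (∫ x, τ x ∂ν - ∫ x, clamp M' (τ x) ∂ν) with hZ2
  constructor
  · linarith
  · linarith

lemma H_zero (ν : Measure E) : H ν (0 : E) = 0 := by
  unfold H
  have : ∀ x : E, max (inner ℝ (0:E) x : ℝ) 0 = 0 := fun x => by
    rw [inner_zero_left, max_self]
  simp_rw [this, integral_zero]

lemma H_tendsto_uniform (νk : ℕ → Measure E) (ν : Measure E)
    [∀ k, IsProbabilityMeasure (νk k)] [IsProbabilityMeasure ν]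
    (hint : ∀ k, Integrable (fun x => x) (νk k)) (hν : Integrable (fun x => x) ν)
    (hso : ∀ k, νk k (octant n)ᶜ = 0) (hsν : ν (octant n)ᶜ = 0)
    (hweak : ∀ f : BoundedContinuousFunction E ℝ,
      Filter.Tendsto (fun k => ∫ x, f x ∂(νk k)) Filter.atTop (𝓝 (∫ x, f x ∂ν)))
    (hmean : Filter.Tendsto (fun k => ∫ x, x ∂(νk k)) Filter.atTop (𝓝 (∫ x, x ∂ν)))
    {ε : ℝ} (hε : 0 < ε) :
    ∀ᶠ k in Filter.atTop, ∀ u : E,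
      H (νk k) u ≤ H ν u + ε * ‖u‖ ∧ H ν u ≤ H (νk k) u + ε * ‖u‖ := by
  classical
  set τ : E → ℝ := fun x => lsum x with hτdef
  have hiτ : ∀ k, Integrable τ (νk k) := fun k => lsum.integrable_comp (hint k)
  have hiτν : Integrable τ ν := lsum.integrable_comp hν
  have hnormle : ∀ (ρ : Measure E), Integrable (fun x => x) ρ → ρ (octant n)ᶜ = 0 →
      ∫ x, ‖x‖ ∂ρ ≤ ∫ x, τ x ∂ρ := by
    intro ρ hρi hρs
    refine integral_mono_ae hρi.norm (lsum.integrable_comp hρi) ?_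
    filter_upwards [ae_octant ρ hρs] with x hx
    exact norm_le_lsum hx
  have hT : Filter.Tendsto (fun k => ∫ x, τ x ∂(νk k)) Filter.atTop (𝓝 (∫ x, τ x ∂ν)) := by
    have hTk : ∀ k, ∫ x, τ x ∂(νk k) = lsum (∫ x, x ∂(νk k)) := fun k =>
      lsum.integral_comp_comm (hint k)
    have hTν : ∫ x, τ x ∂ν = lsum (∫ x, x ∂ν) := lsum.integral_comp_comm hν
    simp_rw [hTk, hTν]
    exact (lsum.continuous.tendsto _).comp hmean
  set C : ℝ := ∫ x, τ x ∂ν + 1 with hCdef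
  have hτν0 : 0 ≤ ∫ x, τ x ∂ν := by
    refine integral_nonneg_of_ae ?_
    filter_upwards [ae_octant ν hsν] with x hx
    exact lsum_nonneg hx
  have hC : 0 < C := by rw [hCdef]; linarith
  have hLν : ∫ x, ‖x‖ ∂ν ≤ C := by
    have := hnormle ν hν hsν
    rw [hCdef]; linarith
  set δ : ℝ := ε / (3 * C) with hδdef
  have hδ : 0 < δ := by positivity
  -- finite cover of the unit ball
  have hcover : Metric.closedBall (0:E) 1 ⊆ ⋃ u : E, Metric.ball u δ := by
    intro u _
    exact Set.mem_iUnion.mpr ⟨u, Metric.mem_ball_self hδ⟩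
  obtain ⟨t, ht⟩ := (isCompact_closedBall (0:E) 1).elim_finite_subcover
    (fun u : E => Metric.ball u δ) (fun _ => Metric.isOpen_ball) hcover
  -- eventual facts
  have ev1 : ∀ᶠ k in Filter.atTop, ∀ u ∈ t, |H (νk k) u - H ν u| < ε / 3 := by
    rw [Filter.eventually_all_finset]
    intro u _
    have := Metric.tendsto_nhds.mp
      (H_tendsto νk ν hint hν hso hsν hweak hmean u) (ε/3) (by positivity)
    simpa [Real.dist_eq] using this
  have ev2 : ∀ᶠ k in Filter.atTop, ∫ x, τ x ∂(νk k) ≤ C := by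
    have := hT.eventually (eventually_le_nhds (show ∫ x, τ x ∂ν < C by rw [hCdef]; linarith))
    exact this
  filter_upwards [ev1, ev2] with k h1 h2
  have hLk : ∫ x, ‖x‖ ∂(νk k) ≤ C := (hnormle (νk k) (hint k) (hso k)).trans h2
  -- first: bound on the unit ball
  have hball : ∀ u : E, ‖u‖ ≤ 1 → |H (νk k) u - H ν u| ≤ ε := by
    intro u hu
    obtain ⟨u₀, hu₀t, hu₀⟩ : ∃ u₀ ∈ t, u ∈ Metric.ball u₀ δ := by
      have := ht (Metric.mem_closedBall.mpr (by simpa using hu))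
      simpa using this
    have hd : ‖u - u₀‖ < δ := by
      rw [← dist_eq_norm]
      exact Metric.mem_ball.mp hu₀
    have l1 : |H (νk k) u - H (νk k) u₀| ≤ ‖u - u₀‖ * ∫ x, ‖x‖ ∂(νk k) :=
      H_lipschitz (νk k) (hint k) u u₀
    have l2 : |H ν u₀ - H ν u| ≤ ‖u₀ - u‖ * ∫ x, ‖x‖ ∂ν := H_lipschitz ν hν u₀ u
    have l3 : ‖u - u₀‖ * ∫ x, ‖x‖ ∂(νk k) ≤ δ * C := by
      apply mul_le_mul hd.le hLk (integral_nonneg fun x => norm_nonneg x) hδ.le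
    have l4 : ‖u₀ - u‖ * ∫ x, ‖x‖ ∂ν ≤ δ * C := by
      rw [norm_sub_rev]
      apply mul_le_mul hd.le hLν (integral_nonneg fun x => norm_nonneg x) hδ.le
    have l5 : |H (νk k) u₀ - H ν u₀| < ε / 3 := h1 u₀ hu₀t
    have hδC : δ * C = ε / 3 := by
      rw [hδdef]; field_simp
    have habs : |H (νk k) u - H ν u| ≤ |H (νk k) u - H (νk k) u₀|
        + |H (νk k) u₀ - H ν u₀| + |H ν u₀ - H ν u| := by
      have := abs_sub_le (H (νk k) u) (H (νk k) u₀) (H ν u)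
      have h2' := abs_sub_le (H (νk k) u₀) (H ν u₀) (H ν u)
      linarith
    calc |H (νk k) u - H ν u| ≤ |H (νk k) u - H (νk k) u₀|
          + |H (νk k) u₀ - H ν u₀| + |H ν u₀ - H ν u| := habs
      _ ≤ δ * C + ε / 3 + δ * C :=
          add_le_add (add_le_add (l1.trans l3) l5.le) (l2.trans l4)
      _ = ε := by rw [hδC]; ring
  -- now scale
  intro u
  by_cases h0 : u = 0
  · rw [h0, H_zero, H_zero, norm_zero, mul_zero]
    simp
  · have hnu : 0 < ‖u‖ := norm_pos_iff.mpr h0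
    set v : E := ‖u‖⁻¹ • u with hvdef
    have hv1 : ‖v‖ ≤ 1 := by
      rw [hvdef, norm_smul, norm_inv, norm_norm, inv_mul_cancel₀ hnu.ne']
    have huv : ‖u‖ • v = u := by
      rw [hvdef, smul_smul, mul_inv_cancel₀ hnu.ne', one_smul]
    have hk' : H (νk k) u = ‖u‖ * H (νk k) v := by rw [← huv, H_smul _ _ hnu.le, huv]
    have hν' : H ν u = ‖u‖ * H ν v := by rw [← huv, H_smul _ _ hnu.le, huv]
    have hb := hball v hv1
    rw [abs_le] at hb
    constructor
    · rw [hk', hν']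
      nlinarith [hb.1, hb.2]
    · rw [hk', hν']
      nlinarith [hb.1, hb.2]

lemma volume_Zc_tendsto (νk : ℕ → Measure E) (ν : Measure E)
    [∀ k, IsProbabilityMeasure (νk k)] [IsProbabilityMeasure ν]
    (hint : ∀ k, Integrable (fun x => x) (νk k)) (hν : Integrable (fun x => x) ν)
    (hso : ∀ k, νk k (octant n)ᶜ = 0) (hsν : ν (octant n)ᶜ = 0)
    (hweak : ∀ f : BoundedContinuousFunction E ℝ,
      Filter.Tendsto (fun k => ∫ x, f x ∂(νk k)) Filter.atTop (𝓝 (∫ x, f x ∂ν)))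
    (hmean : Filter.Tendsto (fun k => ∫ x, x ∂(νk k)) Filter.atTop (𝓝 (∫ x, x ∂ν))) :
    Filter.Tendsto (fun k => (volume (Zc (νk k))).toReal) Filter.atTop
      (𝓝 ((volume (Zc ν)).toReal)) := by
  classical
  set K : Set E := Zc ν with hKdef
  have hKcomp : IsCompact K := isCompact_Zc ν hν
  have hNfin : volume K ≠ ⊤ := hKcomp.measure_lt_top.ne
  have hNkfin : ∀ k, volume (Zc (νk k)) ≠ ⊤ := fun k =>
    (isCompact_Zc (νk k) (hint k)).measure_lt_top.ne
  have hthick : Filter.Tendsto (fun r => volume (Metric.cthickening r K)) (𝓝 0)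
      (𝓝 (volume K)) := tendsto_measure_cthickening_of_isCompact hKcomp
  have htr : Filter.Tendsto (fun r => (volume (Metric.cthickening r K)).toReal) (𝓝 0)
      (𝓝 ((volume K).toReal)) := (ENNReal.tendsto_toReal hNfin).comp hthick
  rw [Metric.tendsto_nhds]
  intro ε' hε'
  set N : ℝ := (volume K).toReal with hNdef
  have hN0 : 0 ≤ N := ENNReal.toReal_nonneg
  -- upper bound eventually
  have evU : ∀ᶠ k in Filter.atTop, (volume (Zc (νk k))).toReal < N + ε' := by
    obtain ⟨ε₀, hε₀pos, hε₀⟩ : ∃ ε₀ : ℝ, 0 < ε₀ ∧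
        (volume (Metric.cthickening ε₀ K)).toReal < N + ε' := by
      have h1 : ∀ᶠ r in 𝓝[>] (0:ℝ),
          (volume (Metric.cthickening r K)).toReal < N + ε' :=
        (htr.mono_left nhdsWithin_le_nhds).eventually
          (eventually_lt_nhds (by linarith))
      have h2 : ∀ᶠ r in 𝓝[>] (0:ℝ), 0 < r := self_mem_nhdsWithin
      obtain ⟨r, hr1, hr2⟩ := (h1.and h2).exists
      exact ⟨r, hr2, hr1⟩
    have evH := H_tendsto_uniform νk ν hint hν hso hsν hweak hmean hε₀pos
    filter_upwards [evH] with k hk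
    have hsub : Zc (νk k) ⊆ Metric.cthickening ε₀ K :=
      Zc_subset_cthickening hν hε₀pos.le fun u => (hk u).1
    have hfin : volume (Metric.cthickening ε₀ K) ≠ ⊤ := by
      have hb : Bornology.IsBounded (Metric.cthickening ε₀ K) :=
        hKcomp.isBounded.cthickening
      exact (Metric.isCompact_of_isClosed_isBounded
        (Metric.isClosed_cthickening) hb).measure_lt_top.ne
    have := ENNReal.toReal_mono hfin (measure_mono hsub)
    linarith
  -- lower bound eventually
  have evL : ∀ᶠ k in Filter.atTop, N - ε' < (volume (Zc (νk k))).toReal := by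
    rcases eq_or_lt_of_le hN0 with hNz | hNpos
    · refine Filter.Eventually.of_forall fun k => ?_
      have : (0:ℝ) ≤ (volume (Zc (νk k))).toReal := ENNReal.toReal_nonneg
      linarith
    · -- interior is nonempty
      have hKne : volume K ≠ 0 := by
        intro h
        rw [hNdef, h] at hNpos
        simp at hNpos
      have hint_ne : (interior K).Nonempty := by
        by_contra hi
        rw [Set.not_nonempty_iff_eq_empty] at hi
        have hfr : frontier K = K := by
          rw [frontier, hi, Set.diff_empty, IsClosed.closure_eq (isClosed_Zc ν)]
        have := Convex.addHaar_frontier volume (convex_Zc ν)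
        rw [hfr] at this
        exact hKne this
      obtain ⟨cpt, hcpt⟩ := hint_ne
      obtain ⟨r, hrpos, hball⟩ : ∃ r > 0, Metric.ball cpt r ⊆ K := by
        obtain ⟨r, hrpos, hball⟩ := Metric.mem_nhds_iff.mp
          (mem_interior_iff_mem_nhds.mp hcpt)
        exact ⟨r, hrpos, hball⟩
      set t : ℝ := ε' / (2 * (n * N + 1)) with htdef
      have htpos : 0 < t := by positivity
      set s : ℝ := min t 1 with hsdef
      have hspos : 0 < s := lt_min htpos one_pos
      have hs1 : s ≤ 1 := min_le_right _ _
      have hst : s ≤ t := min_le_left _ _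
      set ε₁ : ℝ := s * r with hε₁def
      have hε₁pos : 0 < ε₁ := mul_pos hspos hrpos
      have hε₁r : ε₁ ≤ r := by
        rw [hε₁def]
        nlinarith
      have evH := H_tendsto_uniform νk ν hint hν hso hsν hweak hmean hε₁pos
      filter_upwards [evH] with k hk
      have hsub := shrink_subset_Zc hrpos hball hε₁pos.le hε₁r
        (fun u => (hk u).2)
      have hs_eq : ε₁ / r = s := by
        rw [hε₁def, mul_div_assoc, div_self hrpos.ne', mul_one]
      have hvol := volume_homothety_image cpt
        (show (0:ℝ) ≤ 1 - ε₁ / r by rw [hs_eq]; linarith) K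
      have hle : ENNReal.ofReal ((1 - ε₁ / r) ^ n) * volume K ≤ volume (Zc (νk k)) := by
        rw [← hvol]
        exact measure_mono hsub
      have htoReal : ((1 - ε₁ / r) ^ n) * N ≤ (volume (Zc (νk k))).toReal := by
        have h1 := ENNReal.toReal_mono (hNkfin k) hle
        rw [ENNReal.toReal_mul, ENNReal.toReal_ofReal
          (by rw [hs_eq]; exact pow_nonneg (by linarith) n)] at h1
        exact h1
      have hbern : 1 - (n : ℝ) * s ≤ (1 - s) ^ n := by
        have := one_add_mul_le_pow (a := -s) (by linarith) n
        calc 1 - (n:ℝ) * s = 1 + n * (-s) := by ring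
          _ ≤ (1 + -s) ^ n := this
          _ = (1 - s) ^ n := by ring_nf
      rw [hs_eq] at htoReal
      have hfinal : N - ε' / 2 ≤ (1 - s) ^ n * N := by
        have hnts : (n : ℝ) * s * N ≤ ε' / 2 := by
          have h2 : (n:ℝ) * s ≤ n * t := by
            apply mul_le_mul_of_nonneg_left hst (Nat.cast_nonneg n)
          have h3 : (n:ℝ) * t * N ≤ ε' / 2 := by
            have hden : (0:ℝ) < 2 * ((n:ℝ) * N + 1) := by positivity
            have heq : (n:ℝ) * (ε' / (2 * ((n:ℝ) * N + 1))) * N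
                = (n:ℝ) * N * ε' / (2 * ((n:ℝ) * N + 1)) := by ring
            rw [htdef, heq, div_le_iff₀ hden]
            nlinarith [hNpos.le, hε'.le]
          nlinarith [hNpos.le]
        nlinarith [hbern, hNpos.le]
      linarith
  filter_upwards [evU, evL] with k h1 h2
  rw [Real.dist_eq, abs_sub_lt_iff]
  constructor <;> linarith

lemma volume_parbox_eq (v : E) : volume (parbox v) = ∏ i, ENNReal.ofReal (v i) := by
  have hpre : (MeasurableEquiv.toLp 2 (Fin n → ℝ)).symm ⁻¹'
      (Set.univ.pi fun i => Set.Icc 0 (v i)) = parbox v := by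
    ext x
    simp only [Set.mem_preimage, Set.mem_univ_pi, Set.mem_Icc, parbox, Set.mem_setOf_eq]
    rfl
  rw [← hpre, (EuclideanSpace.volume_preserving_symm_measurableEquiv_toLp (Fin n)).measure_preimage
    ((MeasurableSet.univ_pi fun i => measurableSet_Icc).nullMeasurableSet)]
  rw [volume_pi_pi]
  congr 1
  funext i
  rw [Real.volume_Icc, sub_zero]

lemma volume_parbox_toReal (v : E) : (volume (parbox v)).toReal = ∏ i, max (v i) 0 := by
  rw [volume_parbox_eq, ENNReal.toReal_prod]
  refine Finset.prod_congr rfl fun i _ => ?_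
  rcases le_or_gt 0 (v i) with h | h
  · rw [max_eq_left h, ENNReal.toReal_ofReal h]
  · rw [max_eq_right h.le, ENNReal.ofReal_of_nonpos h.le, ENNReal.toReal_zero]

lemma volume_parbox_ne_top (v : E) : volume (parbox v) ≠ ⊤ := by
  rw [volume_parbox_eq]
  exact (ENNReal.prod_lt_top fun i _ => ENNReal.ofReal_lt_top).ne

lemma continuous_prod_max : Continuous fun v : E => ∏ i : Fin n, max (v i) 0 := by
  apply continuous_finset_prod
  intro i _
  exact ((EuclideanSpace.proj (𝕜 := ℝ) i).continuous).max continuous_const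

end GiniAux

theorem gini_extended {m : ℕ}
    (μk : ℕ → Measure (EuclideanSpace ℝ (Fin (m + 1))))
    (μ : Measure (EuclideanSpace ℝ (Fin (m + 1))))
    [∀ k, IsProbabilityMeasure (μk k)] [IsProbabilityMeasure μ]
    (hint : ∀ k, Integrable (fun x => x) (μk k)) (hμint : Integrable (fun x => x) μ)
    (hsupp : ∀ k, μk k (octant (m + 1))ᶜ = 0) (hsuppμ : μ (octant (m + 1))ᶜ = 0)
    (hPk : ∀ k, volume (parbox (∫ x, x ∂(μk k))) ≠ 0)
    (hP : volume (parbox (∫ x, x ∂μ)) ≠ 0)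
    (hweak : ∀ f : BoundedContinuousFunction (EuclideanSpace ℝ (Fin (m + 1))) ℝ,
      Tendsto (fun k => ∫ x, f x ∂(μk k)) atTop (𝓝 (∫ x, f x ∂μ)))
    (hmean : Tendsto (fun k => ∫ x, x ∂(μk k)) atTop (𝓝 (∫ x, x ∂μ))) :
    Tendsto (fun k =>
        (volume (zonoid (μk k))).toReal / (volume (parbox (∫ x, x ∂(μk k)))).toReal)
      atTop (𝓝 ((volume (zonoid μ)).toReal / (volume (parbox (∫ x, x ∂μ))).toReal)) := by
  have hzk : ∀ k, volume (zonoid (μk k)) = volume (GiniAux.Zc (μk k)) := fun k =>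
    GiniAux.volume_zonoid_eq_Zc _ (hint k)
  have hzμ : volume (zonoid μ) = volume (GiniAux.Zc μ) := GiniAux.volume_zonoid_eq_Zc _ hμint
  have hnum := GiniAux.volume_Zc_tendsto μk μ hint hμint hsupp hsuppμ hweak hmean
  have hden : Tendsto (fun k => (volume (parbox (∫ x, x ∂(μk k)))).toReal) atTop
      (𝓝 ((volume (parbox (∫ x, x ∂μ))).toReal)) := by
    simp_rw [GiniAux.volume_parbox_toReal]
    exact (GiniAux.continuous_prod_max.tendsto _).comp hmean
  have hne : (volume (parbox (∫ x, x ∂μ))).toReal ≠ 0 :=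
    ENNReal.toReal_ne_zero.mpr ⟨hP, GiniAux.volume_parbox_ne_top _⟩
  simp_rw [hzk, hzμ]
  exact hnum.div hden hne
end
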